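/- arXiv:1907.09247 — 2 statements merged into one kernel-verified Lean document; each statement's English description precedes it below -/
import Mathlib

section
/- Epistemic splitting in FAEEL (Main Theorem): the FAEEL semantics satisfies the epistemic splitting property, i.e., for every program Π, every epistemic splitting set U of Π and every splitting ⟨B_U(Π),T_U(Π)⟩, a total belief view W is a FAEEL-world view of Π if and only if there is a FAEEL-solution ⟨W_b,W_t⟩ of Π with respect to U such that W = W_b ⊔ W_t. Furthermore, if W is a FAEEL-world view of Π, then ⟨W|_U, W|_Ū⟩ is a FAEEL-solution of Π with respect to U and W = W|_U ⊔ W|_Ū. -/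
namespace Epist

attribute [local instance] Classical.propDecidable

/-- Epistemic formulas over a set (type) of atoms `α`. -/
inductive EForm (α : Type) : Type where
  | bot : EForm α
  | atom : α → EForm α
  | and : EForm α → EForm α → EForm α
  | or : EForm α → EForm α → EForm α
  | imp : EForm α → EForm α → EForm α
  | K : EForm α → EForm α

variable {α : Type}

/-- ¬φ abbreviates φ → ⊥. -/
def EForm.neg (φ : EForm α) : EForm α := .imp φ .bot

/-- ⊤ abbreviates ¬⊥. -/
def EForm.top : EForm α := EForm.neg .bot

/-- Atoms occurring in a formula. -/
def EForm.atoms : EForm α → Set α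
  | .bot => ∅
  | .atom a => {a}
  | .and φ ψ => φ.atoms ∪ ψ.atoms
  | .or φ ψ => φ.atoms ∪ ψ.atoms
  | .imp φ ψ => φ.atoms ∪ ψ.atoms
  | .K φ => φ.atoms

/-- A belief view: a set of HT-interpretations ⟨H,T⟩ (as pairs of sets of atoms). -/
abbrev BView (α : Type) := Set (Set α × Set α)

/-- W^t : the total belief view {⟨T,T⟩ : ⟨H,T⟩ ∈ W}. -/
def tview (W : BView α) : BView α := (fun i => (i.2, i.2)) '' W

/-- Wellformedness of a belief view: nonempty and H ⊆ T for all members. -/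
def isBView (W : BView α) : Prop := W.Nonempty ∧ ∀ i ∈ W, i.1 ⊆ i.2

/-- A belief view is total when all its HT-interpretations are total. -/
def totalView (W : BView α) : Prop := ∀ i ∈ W, i.1 = i.2

/-- Satisfaction of an epistemic formula by a belief interpretation ⟨W,H,T⟩. -/
def sat : EForm α → BView α → Set α → Set α → Prop
  | .bot, _, _, _ => False
  | .atom a, _, H, _ => a ∈ H
  | .and φ ψ, W, H, T => sat φ W H T ∧ sat ψ W H T
  | .or φ ψ, W, H, T => sat φ W H T ∨ sat ψ W H T
  | .imp φ ψ, W, H, T =>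
      (sat φ W H T → sat ψ W H T) ∧ (sat φ (tview W) T T → sat ψ (tview W) T T)
  | .K φ, W, _, _ => ∀ i ∈ W, sat φ W i.1 i.2

/-- ⟨W,H',T'⟩ ⊨ φ for all ⟨H',T'⟩ ∈ W. -/
def epSat (W : BView α) (φ : EForm α) : Prop := ∀ i ∈ W, sat φ W i.1 i.2

/-- W is an epistemic model of the theory Γ. -/
def epModel (W : BView α) (Γ : Set (EForm α)) : Prop :=
  isBView W ∧ ∀ φ ∈ Γ, epSat W φ

/-- ⟨W,H,T⟩ is a belief model of the theory Γ. -/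
def beliefModel (W : BView α) (H T : Set α) (Γ : Set (EForm α)) : Prop :=
  isBView W ∧ H ⊆ T ∧ (∀ φ ∈ Γ, sat φ W H T) ∧ ∀ φ ∈ Γ, epSat W φ

/-- Order ⪯ on belief interpretations: ⟨W',H',T'⟩ ⪯ ⟨W,H,T⟩. -/
def biLE (W' : BView α) (H' T' : Set α) (W : BView α) (H T : Set α) : Prop :=
  (T' = T ∧ H' ⊆ H) ∧
  (∀ i ∈ W, ∃ H₁, (H₁, i.2) ∈ W' ∧ H₁ ⊆ i.1) ∧
  (∀ i ∈ W', ∃ H₁, (H₁, i.2) ∈ W ∧ i.1 ⊆ H₁)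

/-- Strict order ≺ on belief interpretations. -/
def biLT (W' : BView α) (H' T' : Set α) (W : BView α) (H T : Set α) : Prop :=
  biLE W' H' T' W H T ∧ (W', H', T') ≠ (W, H, T)

/-- Order ⪯ on belief views. -/
def viewLE (W₁ W₂ : BView α) : Prop :=
  (∀ i ∈ W₂, ∃ H₁, (H₁, i.2) ∈ W₁ ∧ H₁ ⊆ i.1) ∧
  (∀ i ∈ W₁, ∃ H₂, (H₂, i.2) ∈ W₂ ∧ i.1 ⊆ H₂)

/-- Strict order ≺ on belief views. -/
def viewLT (W₁ W₂ : BView α) : Prop := viewLE W₁ W₂ ∧ W₁ ≠ W₂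

/-- ⟨W,T⟩ is an equilibrium belief model of Γ. -/
def eqBeliefModel (Γ : Set (EForm α)) (W : BView α) (T : Set α) : Prop :=
  totalView W ∧ beliefModel W T T Γ ∧
  ∀ W' H' T', beliefModel W' H' T' Γ → ¬ biLT W' H' T' W T T

/-- ⟨W,T⟩ is a weak equilibrium belief model of Γ: no belief-total (i.e. with total
view) belief model of Γ is ≺-smaller. -/
def weakEqBeliefModel (Γ : Set (EForm α)) (W : BView α) (T : Set α) : Prop :=
  totalView W ∧ beliefModel W T T Γ ∧
  ∀ W' H' T', totalView W' → beliefModel W' H' T' Γ → ¬ biLT W' H' T' W T T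

/-- Identification of a set of propositional interpretations with a total belief view. -/
def ofSets (S : Set (Set α)) : BView α := (fun T => (T, T)) '' S

/-- W is a FAEEL-world view of Γ iff W = { T : ⟨W,T⟩ is an equilibrium belief model }. -/
def FAEEL (Γ : Set (EForm α)) (W : BView α) : Prop :=
  isBView W ∧ totalView W ∧ W = ofSets {T | eqBeliefModel Γ W T}

/-- W is a weak autoepistemic world view of Γ. -/
def weakAEWorldView (Γ : Set (EForm α)) (W : BView α) : Prop :=
  isBView W ∧ totalView W ∧ W = ofSets {T | weakEqBeliefModel Γ W T}

/-- W is a FEEL-world view of Γ. -/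
def FEEL (Γ : Set (EForm α)) (W : BView α) : Prop :=
  totalView W ∧ epModel W Γ ∧ ∀ W', epModel W' Γ → ¬ viewLT W' W

/-- A belief view is simple iff ⟨H,T⟩,⟨H',T⟩ ∈ W imply H = H'. -/
def simpleView (W : BView α) : Prop := ∀ i ∈ W, ∀ j ∈ W, i.2 = j.2 → i.1 = j.1

/-- W is an EEL-world view of Γ. -/
def EEL (Γ : Set (EForm α)) (W : BView α) : Prop :=
  totalView W ∧ epModel W Γ ∧
  ¬ ∃ W', simpleView W' ∧ epModel W' Γ ∧ tview W' = W ∧ ∃ i ∈ W', i.1 ⊂ i.2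

/-- Ordinary here-and-there satisfaction (for objective, i.e. K-free, formulas). -/
def htSat (φ : EForm α) (H T : Set α) : Prop := sat φ (∅ : BView α) H T

/-- T is a stable model of the (objective) theory Δ. -/
def stableModel (Δ : Set (EForm α)) (T : Set α) : Prop :=
  (∀ φ ∈ Δ, htSat φ T T) ∧ ∀ H, H ⊂ T → ¬ ∀ φ ∈ Δ, htSat φ H T

/-- SM[Δ] : the set of stable models of Δ. -/
def SMset (Δ : Set (EForm α)) : Set (Set α) := {T | stableModel Δ T}

/-- Subjective reduct of a formula w.r.t. a belief view W and a signature U: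
each maximal subformula Kφ with Atoms(φ) ⊆ U is replaced by ⊤ if W ⊨ Kφ
and by ⊥ otherwise. -/
noncomputable def reduct (W : BView α) (U : Set α) : EForm α → EForm α
  | .bot => .bot
  | .atom a => .atom a
  | .and φ ψ => .and (reduct W U φ) (reduct W U ψ)
  | .or φ ψ => .or (reduct W U φ) (reduct W U ψ)
  | .imp φ ψ => .imp (reduct W U φ) (reduct W U ψ)
  | .K φ =>
      if φ.atoms ⊆ U then (if epSat W (.K φ) then EForm.top else .bot)
      else .K (reduct W U φ)

/-- W is a G91-world view of Γ iff W = SM[Γ^W]. -/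
def G91 (Γ : Set (EForm α)) (W : BView α) : Prop :=
  isBView W ∧ totalView W ∧ W = ofSets (SMset (reduct W Set.univ '' Γ))

/-- Negatively subjective reduct: each maximal subformula ¬Kφ is replaced
by ⊤ if W ⊭ Kφ and by ⊥ otherwise. -/
noncomputable def negReduct (W : BView α) : EForm α → EForm α
  | .bot => .bot
  | .atom a => .atom a
  | .and φ ψ => .and (negReduct W φ) (negReduct W ψ)
  | .or φ ψ => .or (negReduct W φ) (negReduct W ψ)
  | .imp (.K φ) .bot => if epSat W (.K φ) then .bot else EForm.top
  | .imp φ ψ => .imp (negReduct W φ) (negReduct W ψ)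
  | .K φ => .K (negReduct W φ)

/-- Atom, ⊤ or ⊥. -/
def isAtomBase (φ : EForm α) : Prop := (∃ a, φ = .atom a) ∨ φ = EForm.top ∨ φ = .bot

/-- Objective literals: l, ¬l or ¬¬l for l an atom, ⊤ or ⊥. -/
def isObjLit (φ : EForm α) : Prop :=
  isAtomBase φ ∨ (∃ ψ, isAtomBase ψ ∧ φ = EForm.neg ψ) ∨
    (∃ ψ, isAtomBase ψ ∧ φ = EForm.neg (EForm.neg ψ))

/-- Subjective literals: Kl, ¬Kl or ¬¬Kl for l an objective literal. -/
def isSubjLit (φ : EForm α) : Prop :=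
  (∃ l, isObjLit l ∧ φ = .K l) ∨ (∃ l, isObjLit l ∧ φ = EForm.neg (.K l)) ∨
    (∃ l, isObjLit l ∧ φ = EForm.neg (EForm.neg (.K l)))

/-- Positive subjective literals: Kl. -/
def isPosSubjLit (φ : EForm α) : Prop := ∃ l, isObjLit l ∧ φ = .K l

/-- A rule: a head disjunction of atoms and a body list of literals. -/
structure ERule (α : Type) where
  head : List α
  body : List (EForm α)

/-- Wellformedness of a rule: every body member is an (objective or subjective) literal. -/
def ERule.wf (r : ERule α) : Prop := ∀ φ ∈ r.body, isObjLit φ ∨ isSubjLit φ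

/-- Disjunction of atoms (⊥ when empty). -/
def disjForm : List α → EForm α
  | [] => .bot
  | a :: l => .or (.atom a) (disjForm l)

/-- Conjunction of formulas (⊤ when empty). -/
def conjForm : List (EForm α) → EForm α
  | [] => EForm.top
  | φ :: l => .and φ (conjForm l)

/-- The formula Head(r) ← Body(r) corresponding to a rule. -/
def ERule.form (r : ERule α) : EForm α := .imp (conjForm r.body) (disjForm r.head)

/-- Atoms of Head(r). -/
def ERule.headAtoms (r : ERule α) : Set α := {a | a ∈ r.head}

/-- Atoms of Body_obj(r). -/
def ERule.objBodyAtoms (r : ERule α) : Set α := {a | ∃ φ ∈ r.body, isObjLit φ ∧ a ∈ φ.atoms}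

/-- Atoms of Body_sub(r). -/
def ERule.subjBodyAtoms (r : ERule α) : Set α := {a | ∃ φ ∈ r.body, isSubjLit φ ∧ a ∈ φ.atoms}

/-- Atoms of Body⁺_sub(r). -/
def ERule.posSubjBodyAtoms (r : ERule α) : Set α :=
  {a | ∃ φ ∈ r.body, isPosSubjLit φ ∧ a ∈ φ.atoms}

/-- Atoms(r). -/
def ERule.atoms (r : ERule α) : Set α := r.headAtoms ∪ {a | ∃ φ ∈ r.body, a ∈ φ.atoms}

/-- A rule is objective if all its body literals are objective. -/
def ERule.objective (r : ERule α) : Prop := ∀ φ ∈ r.body, isObjLit φ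

/-- A program is a set of rules. -/
abbrev EProgram (α : Type) := Set (ERule α)

def progWF (P : EProgram α) : Prop := ∀ r ∈ P, r.wf

/-- The theory consisting of the formulas of the rules of a program. -/
def progTheory (P : EProgram α) : Set (EForm α) := ERule.form '' P

def progAtoms (P : EProgram α) : Set α := {a | ∃ r ∈ P, a ∈ r.atoms}

def progObjective (P : EProgram α) : Prop := ∀ r ∈ P, r.objective

/-- U is an epistemic splitting set of P. -/
def splittingSet (P : EProgram α) (U : Set α) : Prop :=
  ∀ r ∈ P, r.atoms ⊆ U ∨ (r.objBodyAtoms ∪ r.headAtoms) ∩ U = ∅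

/-- ⟨B,Tp⟩ is a splitting of P w.r.t. U. -/
def isSplitting (P : EProgram α) (U : Set α) (B Tp : EProgram α) : Prop :=
  B ∩ Tp = ∅ ∧ B ∪ Tp = P ∧ (∀ r ∈ B, r.atoms ⊆ U) ∧
    ∀ r ∈ Tp, (r.objBodyAtoms ∪ r.headAtoms) ∩ U = ∅

/-- Subjective reduct of a rule. -/
noncomputable def ruleReduct (W : BView α) (U : Set α) (r : ERule α) : ERule α :=
  ⟨r.head, r.body.map (reduct W U)⟩

/-- E_U(Π,W) := (T_U(Π))^W_U, here taking the top part Tp as argument. -/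
noncomputable def EU (Tp : EProgram α) (W : BView α) (U : Set α) : EProgram α :=
  ruleReduct W U '' Tp

/-- W_b ⊔ W_t (for total belief views: pointwise unions). -/
def vjoin (W₁ W₂ : BView α) : BView α :=
  {i | ∃ j ∈ W₁, ∃ k ∈ W₂, i = (j.1 ∪ k.1, j.2 ∪ k.2)}

/-- W|_U (for total belief views: pointwise intersection with U). -/
def vrestrict (W : BView α) (U : Set α) : BView α :=
  {i | ∃ j ∈ W, i = (j.1 ∩ U, j.2 ∩ U)}

/-- Epistemic dependence dep(a,b). -/
def dep (P : EProgram α) (a b : α) : Prop :=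
  ∃ r ∈ P, a ∈ r.headAtoms ∪ r.objBodyAtoms ∧ b ∈ r.subjBodyAtoms

/-- Positive epistemic dependence dep⁺(a,b). -/
def depPos (P : EProgram α) (a b : α) : Prop :=
  ∃ r ∈ P, a ∈ r.headAtoms ∪ r.objBodyAtoms ∧ b ∈ r.posSubjBodyAtoms

/-- P is epistemically stratified. -/
def stratified (P : EProgram α) : Prop :=
  ∃ lam : α → ℕ,
    (∀ r ∈ P, ∀ a ∈ r.atoms \ r.subjBodyAtoms, ∀ b ∈ r.atoms \ r.subjBodyAtoms,
      lam a = lam b) ∧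
    ∀ a b, dep P a b → lam a > lam b

/-- P is epistemically tight. -/
def tight (P : EProgram α) : Prop :=
  ∃ lam : α → ℕ,
    (∀ r ∈ P, ∀ a ∈ r.atoms \ r.subjBodyAtoms, ∀ b ∈ r.atoms \ r.subjBodyAtoms,
      lam a = lam b) ∧
    ∀ a b, depPos P a b → lam a > lam b

/-- A semantics S satisfies the epistemic splitting property. -/
def satisfiesSplitting (S : EProgram α → BView α → Prop) : Prop :=
  ∀ P : EProgram α, progWF P → ∀ U : Set α, splittingSet P U →
    ∀ B Tp : EProgram α, isSplitting P U B Tp →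
      ∀ W : BView α,
        S P W ↔ ∃ Wb Wt, S B Wb ∧ S (EU Tp Wb U) Wt ∧ W = vjoin Wb Wt

/-- A semantics S satisfies supra-ASP. -/
def supraASP (S : EProgram α → BView α → Prop) : Prop :=
  ∀ P : EProgram α, progWF P → progObjective P →
    (SMset (progTheory P) ≠ ∅ ∧ ∀ W, (S P W ↔ W = ofSets (SMset (progTheory P)))) ∨
    (SMset (progTheory P) = ∅ ∧ ∀ W, ¬ S P W)

end Epist
namespace Epist

section Aux
variable {α : Type}

/-! ### Basic view lemmas -/

lemma tview_total {W : BView α} (h : totalView W) : tview W = W := by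
  ext i; constructor
  · rintro ⟨⟨Hj, Tj⟩, hj, rfl⟩
    have := h _ hj
    simp only at this ⊢
    subst this
    exact hj
  · intro hi
    obtain ⟨Hi, Ti⟩ := i
    have := h _ hi
    simp only at this
    subst this
    exact ⟨(Hi, Hi), hi, rfl⟩

lemma totalView_tview (W : BView α) : totalView (tview W) := by
  rintro i ⟨j, hj, rfl⟩; rfl

lemma tview_idem (W : BView α) : tview (tview W) = tview W :=
  tview_total (totalView_tview W)

lemma tview_nonempty {W : BView α} (h : W.Nonempty) : (tview W).Nonempty := by
  obtain ⟨i, hi⟩ := h; exact ⟨_, i, hi, rfl⟩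

lemma vrestrict_nonempty {W : BView α} (h : W.Nonempty) (A : Set α) :
    (vrestrict W A).Nonempty := by
  obtain ⟨i, hi⟩ := h; exact ⟨_, i, hi, rfl⟩

lemma totalView_vrestrict {W : BView α} (h : totalView W) (A : Set α) :
    totalView (vrestrict W A) := by
  rintro i ⟨j, hj, rfl⟩; simp [h j hj]

lemma vrestrict_tview (W : BView α) (A : Set α) :
    vrestrict (tview W) A = tview (vrestrict W A) := by
  ext i; constructor
  · rintro ⟨j, ⟨k, hk, rfl⟩, rfl⟩; exact ⟨(k.1 ∩ A, k.2 ∩ A), ⟨k, hk, rfl⟩, rfl⟩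
  · rintro ⟨j, ⟨k, hk, rfl⟩, rfl⟩; exact ⟨(k.2, k.2), ⟨k, hk, rfl⟩, rfl⟩

/-! ### Agreement and relevance -/

/-- Two belief views agree on a signature `A`. -/
def vagree (A : Set α) (W₁ W₂ : BView α) : Prop :=
  (∀ i ∈ W₁, ∃ j ∈ W₂, i.1 ∩ A = j.1 ∩ A ∧ i.2 ∩ A = j.2 ∩ A) ∧
  (∀ j ∈ W₂, ∃ i ∈ W₁, i.1 ∩ A = j.1 ∩ A ∧ i.2 ∩ A = j.2 ∩ A)

lemma vagree_tview {A : Set α} {W₁ W₂ : BView α} (h : vagree A W₁ W₂) :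
    vagree A (tview W₁) (tview W₂) := by
  constructor
  · rintro i ⟨k, hk, rfl⟩
    obtain ⟨j, hj, _, h2⟩ := h.1 k hk
    exact ⟨(j.2, j.2), ⟨j, hj, rfl⟩, h2, h2⟩
  · rintro j ⟨k, hk, rfl⟩
    obtain ⟨i, hi, _, h2⟩ := h.2 k hk
    exact ⟨(i.2, i.2), ⟨i, hi, rfl⟩, h2, h2⟩

lemma mem_atoms_imp₁ {φ ψ : EForm α} {A : Set α} (h : (EForm.imp φ ψ).atoms ⊆ A) :
    φ.atoms ⊆ A := fun a ha => h (Or.inl ha)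

lemma mem_atoms_imp₂ {φ ψ : EForm α} {A : Set α} (h : (EForm.imp φ ψ).atoms ⊆ A) :
    ψ.atoms ⊆ A := fun a ha => h (Or.inr ha)

/-- Relevance: satisfaction only depends on the atoms of the formula. -/
lemma sat_agree {A : Set α} :
    ∀ (φ : EForm α), φ.atoms ⊆ A → ∀ {W₁ W₂ : BView α} {H₁ T₁ H₂ T₂ : Set α},
      vagree A W₁ W₂ → H₁ ∩ A = H₂ ∩ A → T₁ ∩ A = T₂ ∩ A →
      (sat φ W₁ H₁ T₁ ↔ sat φ W₂ H₂ T₂) := by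
  intro φ
  induction φ with
  | bot => intro _ _ _ _ _ _ _ _ _ _; simp [sat]
  | atom a =>
    intro hA W₁ W₂ H₁ T₁ H₂ T₂ hW hH hT
    have ha : a ∈ A := hA rfl
    simp only [sat]
    constructor
    · intro h; have : a ∈ H₁ ∩ A := ⟨h, ha⟩; rw [hH] at this; exact this.1
    · intro h; have : a ∈ H₂ ∩ A := ⟨h, ha⟩; rw [← hH] at this; exact this.1
  | and φ ψ ihφ ihψ =>
    intro hA W₁ W₂ H₁ T₁ H₂ T₂ hW hH hT
    simp only [sat]
    rw [ihφ (fun a ha => hA (Or.inl ha)) hW hH hT, ihψ (fun a ha => hA (Or.inr ha)) hW hH hT]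
  | or φ ψ ihφ ihψ =>
    intro hA W₁ W₂ H₁ T₁ H₂ T₂ hW hH hT
    simp only [sat]
    rw [ihφ (fun a ha => hA (Or.inl ha)) hW hH hT, ihψ (fun a ha => hA (Or.inr ha)) hW hH hT]
  | imp φ ψ ihφ ihψ =>
    intro hA W₁ W₂ H₁ T₁ H₂ T₂ hW hH hT
    simp only [sat]
    rw [ihφ (mem_atoms_imp₁ hA) hW hH hT, ihψ (mem_atoms_imp₂ hA) hW hH hT,
      ihφ (mem_atoms_imp₁ hA) (vagree_tview hW) hT hT,
      ihψ (mem_atoms_imp₂ hA) (vagree_tview hW) hT hT]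
  | K φ ih =>
    intro hA W₁ W₂ H₁ T₁ H₂ T₂ hW hH hT
    simp only [sat]
    constructor
    · intro h j hj
      obtain ⟨i, hi, h1, h2⟩ := hW.2 j hj
      exact (ih hA hW h1 h2).1 (h i hi)
    · intro h i hi
      obtain ⟨j, hj, h1, h2⟩ := hW.1 i hi
      exact (ih hA hW h1 h2).2 (h j hj)

lemma epSat_agree {A : Set α} {φ : EForm α} (hA : φ.atoms ⊆ A) {W₁ W₂ : BView α}
    (hW : vagree A W₁ W₂) : epSat W₁ φ ↔ epSat W₂ φ := by
  constructor
  · intro h j hj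
    obtain ⟨i, hi, h1, h2⟩ := hW.2 j hj
    exact (sat_agree φ hA hW h1 h2).1 (h i hi)
  · intro h i hi
    obtain ⟨j, hj, h1, h2⟩ := hW.1 i hi
    exact (sat_agree φ hA hW h1 h2).2 (h j hj)

lemma vagree_vrestrict (W : BView α) (A : Set α) : vagree A W (vrestrict W A) := by
  constructor
  · intro i hi
    exact ⟨(i.1 ∩ A, i.2 ∩ A), ⟨i, hi, rfl⟩, by simp [Set.inter_assoc]⟩
  · rintro j ⟨i, hi, rfl⟩
    exact ⟨i, hi, by simp [Set.inter_assoc]⟩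

lemma sat_restrict {A : Set α} {φ : EForm α} (hA : φ.atoms ⊆ A) (W : BView α) (H T : Set α) :
    sat φ W H T ↔ sat φ (vrestrict W A) (H ∩ A) (T ∩ A) :=
  sat_agree φ hA (vagree_vrestrict W A) (by simp [Set.inter_assoc]) (by simp [Set.inter_assoc])

lemma epSat_restrict {A : Set α} {φ : EForm α} (hA : φ.atoms ⊆ A) (W : BView α) :
    epSat W φ ↔ epSat (vrestrict W A) φ :=
  epSat_agree hA (vagree_vrestrict W A)

lemma epSat_K {W : BView α} (hne : W.Nonempty) (φ : EForm α) :
    epSat W (.K φ) ↔ epSat W φ := by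
  obtain ⟨i, hi⟩ := hne
  constructor
  · intro h; exact h i hi
  · intro h j hj; exact h

/-! ### Persistence -/

lemma sat_persist {W : BView α} (hwf : ∀ i ∈ W, i.1 ⊆ i.2) :
    ∀ (φ : EForm α) {H T : Set α}, H ⊆ T → sat φ W H T → sat φ (tview W) T T := by
  intro φ
  induction φ with
  | bot => intro H T _ h; exact h
  | atom a => intro H T hHT h; exact hHT h
  | and φ ψ ihφ ihψ => intro H T hHT h; exact ⟨ihφ hHT h.1, ihψ hHT h.2⟩
  | or φ ψ ihφ ihψ =>
    intro H T hHT h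
    rcases h with h | h
    · exact Or.inl (ihφ hHT h)
    · exact Or.inr (ihψ hHT h)
  | imp φ ψ ihφ ihψ =>
    intro H T hHT h
    refine ⟨h.2, ?_⟩
    rw [tview_idem]; exact h.2
  | K φ ih =>
    intro H T hHT h
    rintro j ⟨i, hi, rfl⟩
    exact ih (hwf i hi) (h i hi)

lemma epSat_persist {W : BView α} (hwf : ∀ i ∈ W, i.1 ⊆ i.2) {φ : EForm α}
    (h : epSat W φ) : epSat (tview W) φ := by
  rintro j ⟨i, hi, rfl⟩
  exact sat_persist hwf φ (hwf i hi) (h i hi)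

end Aux
section Aux2
variable {α : Type}

lemma sat_top (W : BView α) (H T : Set α) : sat EForm.top W H T := by
  simp [EForm.top, EForm.neg, sat]

lemma sat_bot_iff (W : BView α) (H T : Set α) : sat (.bot : EForm α) W H T ↔ False := by
  simp [sat]

lemma sat_K_iff (W : BView α) (H T : Set α) (φ : EForm α) :
    sat (.K φ) W H T ↔ epSat W φ := Iff.rfl

/-! ### conj/disj forms -/

lemma sat_conjForm {l : List (EForm α)} {W : BView α} {H T : Set α} :
    sat (conjForm l) W H T ↔ ∀ φ ∈ l, sat φ W H T := by
  induction l with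
  | nil => simp [conjForm, sat_top]
  | cons φ l ih => simp [conjForm, sat, ih]

lemma atoms_conjForm (l : List (EForm α)) :
    (conjForm l).atoms = {a | ∃ φ ∈ l, a ∈ φ.atoms} := by
  induction l with
  | nil => simp [conjForm, EForm.top, EForm.neg, EForm.atoms]
  | cons φ l ih => ext a; simp [conjForm, EForm.atoms, ih]

lemma atoms_disjForm (l : List α) : (disjForm l).atoms = {a | a ∈ l} := by
  induction l with
  | nil => simp [disjForm, EForm.atoms]
  | cons a l ih => ext b; simp [disjForm, EForm.atoms, ih]

lemma form_atoms (r : ERule α) : (r.form).atoms ⊆ r.atoms := by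
  intro a ha
  rcases ha with ha | ha
  · rw [atoms_conjForm] at ha
    exact Or.inr ha
  · rw [atoms_disjForm] at ha
    exact Or.inl ha

/-! ### reduct syntactic lemmas -/

lemma isAtomBase_reduct {φ : EForm α} (h : isAtomBase φ) (Wv : BView α) (U : Set α) :
    reduct Wv U φ = φ := by
  rcases h with ⟨a, rfl⟩ | rfl | rfl <;> simp [reduct, EForm.top, EForm.neg]

lemma isObjLit_reduct {φ : EForm α} (h : isObjLit φ) (Wv : BView α) (U : Set α) :
    reduct Wv U φ = φ := by
  rcases h with h | ⟨ψ, hψ, rfl⟩ | ⟨ψ, hψ, rfl⟩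
  · exact isAtomBase_reduct h Wv U
  · simp [EForm.neg, reduct, isAtomBase_reduct hψ]
  · simp [EForm.neg, reduct, isAtomBase_reduct hψ]

lemma isAtomBase_noK {φ : EForm α} (h : isAtomBase φ) :
    (∀ ψ, φ ≠ .K ψ) ∧ (∀ ψ₁ ψ₂, φ = .imp ψ₁ ψ₂ → ψ₁ = .bot ∨ isAtomBase ψ₁) := by
  rcases h with ⟨a, rfl⟩ | rfl | rfl <;> simp [EForm.top, EForm.neg] <;> intros <;> simp_all

lemma reduct_conjForm (Wv : BView α) (U : Set α) (l : List (EForm α)) :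
    reduct Wv U (conjForm l) = conjForm (l.map (reduct Wv U)) := by
  induction l with
  | nil => simp [conjForm, EForm.top, EForm.neg, reduct]
  | cons φ l ih => simp [conjForm, reduct, ih]

lemma reduct_disjForm (Wv : BView α) (U : Set α) (l : List α) :
    reduct Wv U (disjForm l) = disjForm l := by
  induction l with
  | nil => simp [disjForm, reduct]
  | cons a l ih => simp [disjForm, reduct, ih]

lemma ruleReduct_form (Wv : BView α) (U : Set α) (r : ERule α) :
    (ruleReduct Wv U r).form = reduct Wv U r.form := by
  simp [ruleReduct, ERule.form, reduct, reduct_conjForm, reduct_disjForm]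

lemma isObjLit_atoms {φ : EForm α} (h : isObjLit φ) :
    φ.atoms = ∅ ∨ ∃ a, φ.atoms = {a} := by
  have base : ∀ ψ : EForm α, isAtomBase ψ → ψ.atoms = ∅ ∨ ∃ a, ψ.atoms = {a} := by
    rintro ψ (⟨a, rfl⟩ | rfl | rfl)
    · exact Or.inr ⟨a, rfl⟩
    · left; simp [EForm.top, EForm.neg, EForm.atoms]
    · left; simp [EForm.atoms]
  rcases h with h | ⟨ψ, hψ, rfl⟩ | ⟨ψ, hψ, rfl⟩
  · exact base _ h
  · rcases base _ hψ with h | h <;> simp [EForm.neg, EForm.atoms, h] <;> exact Or.inr ⟨_, rfl⟩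
  · rcases base _ hψ with h | h <;> simp [EForm.neg, EForm.atoms, h] <;> exact Or.inr ⟨_, rfl⟩

lemma reduct_K_atoms {l : EForm α} (hl : isObjLit l) (Wv : BView α) (U : Set α) :
    (reduct Wv U (.K l)).atoms ∩ U = ∅ := by
  by_cases hsub : l.atoms ⊆ U
  · simp only [reduct, hsub, if_true]
    by_cases hep : epSat Wv (.K l) <;>
      simp [hep, EForm.top, EForm.neg, EForm.atoms]
  · simp only [reduct, hsub, if_false]
    rw [show (EForm.K (reduct Wv U l)).atoms = (reduct Wv U l).atoms from rfl,
      isObjLit_reduct hl]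
    rcases isObjLit_atoms hl with h | ⟨a, h⟩
    · simp [h]
    · rw [h]
      have : a ∉ U := fun haU => hsub (by rw [h]; intro x hx; simp at hx; subst hx; exact haU)
      ext x; simp; rintro rfl; exact this

lemma isSubjLit_reduct_atoms {φ : EForm α} (h : isSubjLit φ) (Wv : BView α) (U : Set α) :
    (reduct Wv U φ).atoms ∩ U = ∅ := by
  rcases h with ⟨l, hl, rfl⟩ | ⟨l, hl, rfl⟩ | ⟨l, hl, rfl⟩
  · exact reduct_K_atoms hl Wv U
  · show ((reduct Wv U (.imp (.K l) .bot)).atoms) ∩ U = ∅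
    rw [show reduct Wv U (.imp (.K l) .bot) = .imp (reduct Wv U (.K l)) .bot from rfl]
    rw [show (EForm.imp (reduct Wv U (.K l)) .bot).atoms
        = (reduct Wv U (.K l)).atoms ∪ (∅ : Set α) from rfl]
    rw [Set.union_empty]
    exact reduct_K_atoms hl Wv U
  · show ((reduct Wv U (.imp (.imp (.K l) .bot) .bot)).atoms) ∩ U = ∅
    rw [show reduct Wv U (.imp (.imp (.K l) .bot) .bot)
        = .imp (.imp (reduct Wv U (.K l)) .bot) .bot from rfl]
    have : (EForm.imp (.imp (reduct Wv U (.K l)) .bot) .bot).atoms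
        = (reduct Wv U (.K l)).atoms ∪ ∅ ∪ ∅ := rfl
    rw [this, Set.union_empty, Set.union_empty]
    exact reduct_K_atoms hl Wv U

/-- Atoms of the reduct of a top rule avoid `U`. -/
lemma ruleReduct_atoms {r : ERule α} (hwfr : r.wf)
    (htp : (r.objBodyAtoms ∪ r.headAtoms) ∩ U = ∅) (Wv : BView α) :
    ((ruleReduct Wv U r).form).atoms ⊆ Uᶜ := by
  intro a ha
  intro haU
  rw [ruleReduct_form] at ha
  have hdisj : ∀ x ∈ r.headAtoms, x ∉ U := by
    intro x hx hxU
    exact absurd (Set.eq_empty_iff_forall_notMem.1 htp x ⟨Or.inr hx, hxU⟩) (fun h => h)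
  rcases ha with ha | ha
  · -- body part
    rw [reduct_conjForm, atoms_conjForm] at ha
    obtain ⟨φ', hφ', haφ⟩ := ha
    rw [List.mem_map] at hφ'
    obtain ⟨φ, hφ, rfl⟩ := hφ'
    rcases hwfr φ hφ with hobj | hsubj
    · rw [isObjLit_reduct hobj] at haφ
      have : a ∈ r.objBodyAtoms := ⟨φ, hφ, hobj, haφ⟩
      exact absurd (Set.eq_empty_iff_forall_notMem.1 htp a ⟨Or.inl this, haU⟩) (fun h => h)
    · have := isSubjLit_reduct_atoms hsubj Wv U
      exact absurd (Set.eq_empty_iff_forall_notMem.1 this a ⟨haφ, haU⟩) (fun h => h)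
  · rw [reduct_disjForm, atoms_disjForm] at ha
    exact hdisj a ha haU

/-! ### the reduct satisfaction lemma -/

lemma sat_reduct_iff {Wv : BView α} {U : Set α} :
    ∀ (φ : EForm α) {W₀ : BView α}, W₀.Nonempty →
      (∀ ψ : EForm α, ψ.atoms ⊆ U → (epSat W₀ (.K ψ) ↔ epSat Wv (.K ψ))) →
      (∀ ψ : EForm α, ψ.atoms ⊆ U → (epSat (tview W₀) (.K ψ) ↔ epSat Wv (.K ψ))) →
      ∀ H T, sat (reduct Wv U φ) W₀ H T ↔ sat φ W₀ H T := by
  intro φ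
  induction φ with
  | bot => intro W₀ _ _ _ H T; exact Iff.rfl
  | atom a => intro W₀ _ _ _ H T; exact Iff.rfl
  | and φ ψ ihφ ihψ =>
    intro W₀ hne h1 h2 H T
    show sat (.and _ _) W₀ H T ↔ _
    simp only [sat]
    rw [ihφ hne h1 h2, ihψ hne h1 h2]
  | or φ ψ ihφ ihψ =>
    intro W₀ hne h1 h2 H T
    show sat (.or _ _) W₀ H T ↔ _
    simp only [sat]
    rw [ihφ hne h1 h2, ihψ hne h1 h2]
  | imp φ ψ ihφ ihψ =>
    intro W₀ hne h1 h2 H T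
    have hne' : (tview W₀).Nonempty := tview_nonempty hne
    have h2' : ∀ ψ : EForm α, ψ.atoms ⊆ U →
        (epSat (tview (tview W₀)) (.K ψ) ↔ epSat Wv (.K ψ)) := by
      rw [tview_idem]; exact h2
    show sat (.imp _ _) W₀ H T ↔ _
    simp only [sat]
    rw [ihφ hne h1 h2, ihψ hne h1 h2, ihφ hne' h2 h2', ihψ hne' h2 h2']
  | K φ ih =>
    intro W₀ hne h1 h2 H T
    by_cases hsub : φ.atoms ⊆ U
    · have hKiff : epSat W₀ φ ↔ epSat Wv (.K φ) := by
        rw [← epSat_K hne φ]; exact h1 φ hsub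
      by_cases hep : epSat Wv (.K φ)
      · rw [show reduct Wv U (.K φ) = EForm.top by simp [reduct, hsub, hep]]
        simp only [sat_top, sat_K_iff, true_iff]
        exact hKiff.2 hep
      · rw [show reduct Wv U (.K φ) = .bot by simp [reduct, hsub, hep]]
        simp only [sat_bot_iff, sat_K_iff, false_iff]
        exact fun h => hep (hKiff.1 h)
    · rw [show reduct Wv U (.K φ) = .K (reduct Wv U φ) by simp [reduct, hsub]]
      simp only [sat_K_iff]
      constructor
      · intro h i hi; exact (ih hne h1 h2 i.1 i.2).1 (h i hi)
      · intro h i hi; exact (ih hne h1 h2 i.1 i.2).2 (h i hi)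

end Aux2
section Aux3
variable {α : Type}

/-! ### more structural lemmas -/

lemma mem_total {W : BView α} (h : totalView W) {i : Set α × Set α} (hi : i ∈ W) :
    (i.2, i.2) ∈ W := by
  have := h i hi
  obtain ⟨H, T⟩ := i
  simp only at this
  subst this
  exact hi

lemma vagree_V {U : Set α} {W' : BView α} (htotV : ∀ i ∈ W', i.1 ∩ Uᶜ = i.2 ∩ Uᶜ) :
    vagree Uᶜ W' (vrestrict (tview W') Uᶜ) := by
  constructor
  · intro i hi
    refine ⟨(i.2 ∩ Uᶜ, i.2 ∩ Uᶜ), ⟨(i.2, i.2), ⟨i, hi, rfl⟩, rfl⟩, ?_, ?_⟩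
    · rw [htotV i hi]; simp [Set.inter_assoc]
    · simp [Set.inter_assoc]
  · rintro j ⟨k, ⟨i, hi, rfl⟩, rfl⟩
    refine ⟨i, hi, ?_, ?_⟩
    · rw [htotV i hi]; simp [Set.inter_assoc]
    · simp [Set.inter_assoc]

lemma vrestrict_here_total {U : Set α} {W' : BView α}
    (htotV : ∀ i ∈ W', i.1 ∩ Uᶜ = i.2 ∩ Uᶜ) :
    vrestrict W' Uᶜ = vrestrict (tview W') Uᶜ := by
  ext j; constructor
  · rintro ⟨i, hi, rfl⟩
    exact ⟨(i.2, i.2), ⟨i, hi, rfl⟩, by rw [htotV i hi]⟩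
  · rintro ⟨k, ⟨i, hi, rfl⟩, rfl⟩
    exact ⟨i, hi, by rw [htotV i hi]⟩

lemma tview_of_biLE {W₁ W : BView α} {H₁ T₁ T : Set α}
    (h : biLE W₁ H₁ T₁ W T T) (hW : totalView W) : tview W₁ = W := by
  ext i; constructor
  · rintro ⟨j, hj, rfl⟩
    obtain ⟨H₂, hH₂, _⟩ := h.2.2 j hj
    exact mem_total hW (i := (H₂, j.2)) hH₂
  · intro hi
    obtain ⟨H₂, hH₂, _⟩ := h.2.1 i hi
    have h2 := hW i hi
    obtain ⟨Hi, Ti⟩ := i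
    simp only at h2 hH₂ ⊢
    subst h2
    exact ⟨(H₂, Hi), hH₂, rfl⟩

lemma biLE_restrict {W₁ W : BView α} {H₁ T : Set α} (A : Set α)
    (h : biLE W₁ H₁ T W T T) (hW : totalView W) :
    biLE (vrestrict W₁ A) (H₁ ∩ A) (T ∩ A) (vrestrict W A) (T ∩ A) (T ∩ A) := by
  refine ⟨⟨rfl, Set.inter_subset_inter_left _ h.1.2⟩, ?_, ?_⟩
  · rintro i ⟨j, hj, rfl⟩
    obtain ⟨H₂, hH₂, hsub⟩ := h.2.1 j hj
    exact ⟨H₂ ∩ A, ⟨(H₂, j.2), hH₂, rfl⟩, Set.inter_subset_inter_left _ hsub⟩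
  · rintro i ⟨j, hj, rfl⟩
    obtain ⟨H₂, hH₂, hsub⟩ := h.2.2 j hj
    have := hW _ hH₂
    simp only at this
    subst this
    exact ⟨j.2 ∩ A, ⟨(j.2, j.2), hH₂, rfl⟩, Set.inter_subset_inter_left _ hsub⟩

/-- Every equilibrium belief model of a theory over atoms `A` has `T ⊆ A`. -/
lemma eq_subset {Γ : Set (EForm α)} {A : Set α} (hΓ : ∀ φ ∈ Γ, φ.atoms ⊆ A)
    {W : BView α} {T : Set α} (h : eqBeliefModel Γ W T) : T ⊆ A := by
  obtain ⟨htot, hbm, hmin⟩ := h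
  set W' : BView α := {j | ∃ i ∈ W, j = (i.2 ∩ A, i.2)} with hW'
  have hag : vagree A W' W := by
    constructor
    · rintro j ⟨i, hi, rfl⟩
      refine ⟨i, hi, ?_, rfl⟩
      simp only
      rw [← htot i hi]
      simp [Set.inter_assoc]
    · intro i hi
      refine ⟨(i.2 ∩ A, i.2), ⟨i, hi, rfl⟩, ?_, rfl⟩
      simp only
      rw [← htot i hi]
      simp [Set.inter_assoc]
  have hbm' : beliefModel W' (T ∩ A) T Γ := by
    refine ⟨⟨?_, ?_⟩, Set.inter_subset_left, ?_, ?_⟩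
    · obtain ⟨i, hi⟩ := hbm.1.1
      exact ⟨(i.2 ∩ A, i.2), i, hi, rfl⟩
    · rintro j ⟨i, hi, rfl⟩
      exact Set.inter_subset_left
    · intro φ hφ
      exact (sat_agree φ (hΓ φ hφ) hag (by simp [Set.inter_assoc]) rfl).2
        (hbm.2.2.1 φ hφ)
    · intro φ hφ
      rintro j ⟨i, hi, rfl⟩
      refine (sat_agree φ (hΓ φ hφ) hag ?_ rfl).2 (hbm.2.2.2 φ hφ i hi)
      simp only
      rw [← htot i hi]
      simp [Set.inter_assoc]
  have hle : biLE W' (T ∩ A) T W T T := by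
    refine ⟨⟨rfl, Set.inter_subset_left⟩, ?_, ?_⟩
    · intro i hi
      refine ⟨i.2 ∩ A, ⟨i, hi, rfl⟩, ?_⟩
      rw [htot i hi]; exact Set.inter_subset_left
    · rintro j ⟨i, hi, rfl⟩
      exact ⟨i.2, mem_total htot hi, Set.inter_subset_left⟩
  have := hmin W' (T ∩ A) T hbm'
  rw [biLT] at this
  push_neg at this
  have heq := this hle
  have : T ∩ A = T := congrArg (fun p => p.2.1) heq
  rw [← this]; exact Set.inter_subset_right

lemma FAEEL_elem_subset {Γ : Set (EForm α)} {A : Set α} (hΓ : ∀ φ ∈ Γ, φ.atoms ⊆ A)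
    {W : BView α} (h : FAEEL Γ W) : ∀ i ∈ W, i.1 ⊆ A ∧ i.2 ⊆ A := by
  intro i hi
  rw [h.2.2] at hi
  obtain ⟨T, hT, rfl⟩ := hi
  exact ⟨eq_subset hΓ hT, eq_subset hΓ hT⟩

lemma vjoin_comm (W₁ W₂ : BView α) : vjoin W₁ W₂ = vjoin W₂ W₁ := by
  ext i
  constructor
  · rintro ⟨j, hj, k, hk, rfl⟩
    exact ⟨k, hk, j, hj, by rw [Set.union_comm k.1, Set.union_comm k.2]⟩
  · rintro ⟨j, hj, k, hk, rfl⟩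
    exact ⟨k, hk, j, hj, by rw [Set.union_comm k.1, Set.union_comm k.2]⟩

lemma vrestrict_vjoin {A : Set α} {W₁ W₂ : BView α}
    (h1 : ∀ i ∈ W₁, i.1 ⊆ A ∧ i.2 ⊆ A) (h2 : ∀ i ∈ W₂, i.1 ∩ A = ∅ ∧ i.2 ∩ A = ∅)
    (hne : W₂.Nonempty) : vrestrict (vjoin W₁ W₂) A = W₁ := by
  ext i; constructor
  · rintro ⟨j, ⟨p, hp, q, hq, rfl⟩, rfl⟩
    have e1 : (p.1 ∪ q.1) ∩ A = p.1 := by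
      rw [Set.union_inter_distrib_right, (h2 q hq).1, Set.union_empty,
        Set.inter_eq_left.2 (h1 p hp).1]
    have e2 : (p.2 ∪ q.2) ∩ A = p.2 := by
      rw [Set.union_inter_distrib_right, (h2 q hq).2, Set.union_empty,
        Set.inter_eq_left.2 (h1 p hp).2]
    simp only [e1, e2]
    rwa [Prod.mk.eta]
  · intro hi
    obtain ⟨q, hq⟩ := hne
    refine ⟨(i.1 ∪ q.1, i.2 ∪ q.2), ⟨i, hi, q, hq, rfl⟩, ?_⟩
    have e1 : (i.1 ∪ q.1) ∩ A = i.1 := by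
      rw [Set.union_inter_distrib_right, (h2 q hq).1, Set.union_empty,
        Set.inter_eq_left.2 (h1 i hi).1]
    have e2 : (i.2 ∪ q.2) ∩ A = i.2 := by
      rw [Set.union_inter_distrib_right, (h2 q hq).2, Set.union_empty,
        Set.inter_eq_left.2 (h1 i hi).2]
    simp only [e1, e2]

/-! ### negated-K satisfaction computations -/

lemma sat_negK_iff (W : BView α) (H T : Set α) (l : EForm α) :
    sat (EForm.neg (.K l)) W H T ↔ ¬ epSat W l ∧ ¬ epSat (tview W) l := by
  show (sat (.K l) W H T → False) ∧ (sat (.K l) (tview W) T T → False) ↔ _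
  rw [sat_K_iff, sat_K_iff]

lemma sat_negnegK_iff (W : BView α) (H T : Set α) (l : EForm α) :
    sat (EForm.neg (EForm.neg (.K l))) W H T ↔
      ¬ sat (EForm.neg (.K l)) W H T ∧ ¬ sat (EForm.neg (.K l)) (tview W) T T := by
  show (sat (EForm.neg (.K l)) W H T → False) ∧
      (sat (EForm.neg (.K l)) (tview W) T T → False) ↔ _
  rfl

end Aux3
section Aux4
variable {α : Type}

lemma objLit_atoms_compl {U : Set α} {l : EForm α} (hl : isObjLit l)
    (hsub : ¬ l.atoms ⊆ U) : l.atoms ⊆ Uᶜ := by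
  rcases isObjLit_atoms hl with h | ⟨a, h⟩
  · exact absurd (by simp [h]) hsub
  · rw [h]
    intro x hx
    simp only [Set.mem_singleton_iff] at hx
    subst hx
    intro hxU
    exact hsub (by rw [h]; intro y hy; simp only [Set.mem_singleton_iff] at hy; subst hy; exact hxU)

/-- Key transfer lemma for body literals of top rules. -/
lemma lit_transfer {U : Set α} {W' : BView α}
    (hwfW : ∀ i ∈ W', i.1 ⊆ i.2) (hne : W'.Nonempty)
    (htotV : ∀ i ∈ W', i.1 ∩ Uᶜ = i.2 ∩ Uᶜ)
    {H T : Set α} (hHV : H ∩ Uᶜ = T ∩ Uᶜ)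
    {φ : EForm α}
    (hφ : (isObjLit φ ∧ φ.atoms ∩ U = ∅) ∨ isSubjLit φ)
    (hsat : sat φ W' H T) :
    sat (reduct (vrestrict (tview W') U) U φ) (vrestrict (tview W') Uᶜ)
      (T ∩ Uᶜ) (T ∩ Uᶜ) := by
  set W₀ := tview W' with hW₀def
  set Wb := vrestrict W₀ U with hWbdef
  set Wt := vrestrict W₀ Uᶜ with hWtdef
  have hW₀ne : W₀.Nonempty := tview_nonempty hne
  have hWbne : Wb.Nonempty := vrestrict_nonempty hW₀ne U
  have hWtne : Wt.Nonempty := vrestrict_nonempty hW₀ne Uᶜ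
  have htW₀ : tview W₀ = W₀ := tview_idem W'
  have htWt : tview Wt = Wt := tview_total (totalView_vrestrict (totalView_tview W') Uᶜ)
  have hagV : vagree Uᶜ W' Wt := vagree_V htotV
  have hH' : H ∩ Uᶜ = (T ∩ Uᶜ) ∩ Uᶜ := by rw [hHV]; simp [Set.inter_assoc]
  have hT' : T ∩ Uᶜ = (T ∩ Uᶜ) ∩ Uᶜ := by simp [Set.inter_assoc]
  rcases hφ with ⟨hobj, hdisU⟩ | hsubj
  · rw [isObjLit_reduct hobj]
    have hA : φ.atoms ⊆ Uᶜ := fun a ha haU =>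
      Set.eq_empty_iff_forall_notMem.1 hdisU a ⟨ha, haU⟩
    exact (sat_agree φ hA hagV hH' hT').1 hsat
  rcases hsubj with ⟨l, hl, rfl⟩ | ⟨l, hl, rfl⟩ | ⟨l, hl, rfl⟩
  · -- φ = K l
    rw [sat_K_iff] at hsat
    by_cases hsub : l.atoms ⊆ U
    · have h1 : epSat W₀ l := epSat_persist hwfW hsat
      have h2 : epSat Wb l := (epSat_restrict hsub W₀).1 h1
      have h3 : epSat Wb (.K l) := (epSat_K hWbne l).2 h2
      rw [show reduct Wb U (.K l) = EForm.top by simp [reduct, hsub, h3]]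
      exact sat_top _ _ _
    · rw [show reduct Wb U (.K l) = .K (reduct Wb U l) by simp [reduct, hsub],
        isObjLit_reduct hl, sat_K_iff]
      exact (epSat_agree (objLit_atoms_compl hl hsub) hagV).1 hsat
  · -- φ = ¬ K l
    obtain ⟨hs1, hs2⟩ := (sat_negK_iff W' H T l).1 hsat
    rw [← hW₀def] at hs2
    have hred : reduct Wb U (EForm.neg (.K l)) = EForm.neg (reduct Wb U (.K l)) := rfl
    by_cases hsub : l.atoms ⊆ U
    · have h2 : ¬ epSat Wb l := fun h => hs2 ((epSat_restrict hsub W₀).2 h)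
      have h3 : ¬ epSat Wb (.K l) := fun h => h2 ((epSat_K hWbne l).1 h)
      rw [hred, show reduct Wb U (.K l) = .bot by simp [reduct, hsub, h3]]
      exact sat_top _ _ _
    · rw [hred, show reduct Wb U (.K l) = .K (reduct Wb U l) by simp [reduct, hsub],
        isObjLit_reduct hl, sat_negK_iff, htWt]
      have : ¬ epSat Wt l := fun h =>
        hs1 ((epSat_agree (objLit_atoms_compl hl hsub) hagV).2 h)
      exact ⟨this, this⟩
  · -- φ = ¬ ¬ K l
    obtain ⟨hs1, hs2⟩ := (sat_negnegK_iff W' H T l).1 hsat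
    rw [← hW₀def] at hs2
    have hepW₀ : epSat W₀ l := by
      by_contra hcon
      exact hs2 ((sat_negK_iff W₀ T T l).2 (by rw [htW₀]; exact ⟨hcon, hcon⟩))
    have hred : reduct Wb U (EForm.neg (EForm.neg (.K l)))
        = EForm.neg (EForm.neg (reduct Wb U (.K l))) := rfl
    by_cases hsub : l.atoms ⊆ U
    · have h2 : epSat Wb l := (epSat_restrict hsub W₀).1 hepW₀
      have h3 : epSat Wb (.K l) := (epSat_K hWbne l).2 h2
      rw [hred, show reduct Wb U (.K l) = EForm.top by simp [reduct, hsub, h3]]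
      simp [EForm.neg, EForm.top, sat]
    · rw [hred, show reduct Wb U (.K l) = .K (reduct Wb U l) by simp [reduct, hsub],
        isObjLit_reduct hl, sat_negnegK_iff, htWt]
      have hWtl : epSat Wt l :=
        (epSat_restrict (objLit_atoms_compl hl hsub) W₀).1 hepW₀
      have : ¬ sat (EForm.neg (.K l)) Wt (T ∩ Uᶜ) (T ∩ Uᶜ) := by
        rw [sat_negK_iff, htWt]
        intro h
        exact h.1 hWtl
      exact ⟨this, this⟩

/-- Transfer lemma for top rules: from satisfaction of the reduct rule at the
`Uᶜ`-part and total-level satisfaction of the rule, obtain satisfaction. -/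
lemma top_transfer {U : Set α} {W' : BView α} {r : ERule α}
    (hwfr : r.wf) (htp : (r.objBodyAtoms ∪ r.headAtoms) ∩ U = ∅)
    (hwfW : ∀ i ∈ W', i.1 ⊆ i.2) (hne : W'.Nonempty)
    (htotV : ∀ i ∈ W', i.1 ∩ Uᶜ = i.2 ∩ Uᶜ)
    {H T : Set α} (hHV : H ∩ Uᶜ = T ∩ Uᶜ)
    (hred : sat ((ruleReduct (vrestrict (tview W') U) U r).form)
        (vrestrict (tview W') Uᶜ) (T ∩ Uᶜ) (T ∩ Uᶜ))
    (htot : sat r.form (tview W') T T) :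
    sat r.form W' H T := by
  set W₀ := tview W' with hW₀def
  set Wb := vrestrict W₀ U with hWbdef
  set Wt := vrestrict W₀ Uᶜ with hWtdef
  have hagV : vagree Uᶜ W' Wt := vagree_V htotV
  have hH' : H ∩ Uᶜ = (T ∩ Uᶜ) ∩ Uᶜ := by rw [hHV]; simp [Set.inter_assoc]
  have hT' : T ∩ Uᶜ = (T ∩ Uᶜ) ∩ Uᶜ := by simp [Set.inter_assoc]
  have hheadA : (disjForm r.head).atoms ⊆ Uᶜ := by
    rw [atoms_disjForm]
    intro a ha haU
    exact Set.eq_empty_iff_forall_notMem.1 htp a ⟨Or.inr ha, haU⟩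
  constructor
  · -- here level
    intro hbody
    have hlits : ∀ φ ∈ r.body, sat φ W' H T := sat_conjForm.1 hbody
    have hredbody : sat (conjForm (r.body.map (reduct Wb U))) Wt (T ∩ Uᶜ) (T ∩ Uᶜ) := by
      rw [sat_conjForm]
      intro ψ hψ
      rw [List.mem_map] at hψ
      obtain ⟨φ, hφ, rfl⟩ := hψ
      refine lit_transfer hwfW hne htotV hHV ?_ (hlits φ hφ)
      rcases hwfr φ hφ with hobj | hsubj
      · refine Or.inl ⟨hobj, ?_⟩
        ext a
        simp only [Set.mem_inter_iff, Set.mem_empty_iff_false, iff_false, not_and]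
        intro ha haU
        exact Set.eq_empty_iff_forall_notMem.1 htp a ⟨Or.inl ⟨φ, hφ, hobj, ha⟩, haU⟩
      · exact Or.inr hsubj
    have hhead : sat (disjForm r.head) Wt (T ∩ Uᶜ) (T ∩ Uᶜ) := hred.1 hredbody
    exact (sat_agree (disjForm r.head) hheadA hagV hH' hT').2 hhead
  · -- total level
    exact htot.1

end Aux4
section Aux5
variable {α : Type}

lemma epSatK_restrict {U : Set α} {X : BView α} (hne : X.Nonempty) {ψ : EForm α}
    (hψ : ψ.atoms ⊆ U) : epSat X (.K ψ) ↔ epSat (vrestrict X U) (.K ψ) := by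
  rw [epSat_K hne, epSat_K (vrestrict_nonempty hne U), epSat_restrict hψ]

lemma sat_B_iff {r : ERule α} {U : Set α} (hrU : r.atoms ⊆ U) (W₁ : BView α)
    (H T : Set α) :
    sat r.form W₁ H T ↔ sat r.form (vrestrict W₁ U) (H ∩ U) (T ∩ U) :=
  sat_restrict ((form_atoms r).trans hrU) W₁ H T

lemma sat_Tp_iff {r : ERule α} {U : Set α} {Wv W₁ : BView α} (hne : W₁.Nonempty)
    (h1 : vrestrict W₁ U = Wv) (h2 : vrestrict (tview W₁) U = Wv) (H T : Set α) :
    sat ((ruleReduct Wv U r).form) W₁ H T ↔ sat r.form W₁ H T := by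
  rw [ruleReduct_form]
  refine sat_reduct_iff r.form hne ?_ ?_ H T
  · intro ψ hψ; rw [← h1]; exact epSatK_restrict hne hψ
  · intro ψ hψ; rw [← h2]; exact epSatK_restrict (tview_nonempty hne) hψ

lemma progB_atoms {B : EProgram α} {U : Set α} (hB : ∀ r ∈ B, r.atoms ⊆ U) :
    ∀ φ ∈ progTheory B, φ.atoms ⊆ U := by
  rintro φ ⟨r, hr, rfl⟩; exact (form_atoms r).trans (hB r hr)

lemma progEU_atoms {Tp : EProgram α} {U : Set α} (hwfTp : ∀ r ∈ Tp, r.wf)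
    (hTp : ∀ r ∈ Tp, (r.objBodyAtoms ∪ r.headAtoms) ∩ U = ∅) (Wv : BView α) :
    ∀ φ ∈ progTheory (EU Tp Wv U), φ.atoms ⊆ Uᶜ := by
  rintro φ ⟨r', ⟨r, hr, rfl⟩, rfl⟩
  exact ruleReduct_atoms (hwfTp r hr) (hTp r hr) Wv

lemma union_inter_left {U Tb Tt : Set α} (hTb : Tb ⊆ U) (hTt : Tt ⊆ Uᶜ) :
    (Tb ∪ Tt) ∩ U = Tb := by
  have h1 : Tt ∩ U = ∅ :=
    Set.eq_empty_iff_forall_notMem.2 (fun a ⟨ha, haU⟩ => hTt ha haU)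
  rw [Set.union_inter_distrib_right, Set.inter_eq_left.2 hTb, h1, Set.union_empty]

lemma union_inter_right {U Tb Tt : Set α} (hTb : Tb ⊆ U) (hTt : Tt ⊆ Uᶜ) :
    (Tb ∪ Tt) ∩ Uᶜ = Tt := by
  have h1 : Tb ∩ Uᶜ = ∅ :=
    Set.eq_empty_iff_forall_notMem.2 (fun a ⟨ha, haU⟩ => haU (hTb ha))
  rw [Set.union_inter_distrib_right, h1, Set.inter_eq_left.2 hTt, Set.empty_union]

lemma restrict_total_inter {W₁ X : BView α} {A : Set α} (h : vrestrict W₁ A = X)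
    (hX : totalView X) : ∀ i ∈ W₁, i.1 ∩ A = i.2 ∩ A := by
  intro i hi
  have : (i.1 ∩ A, i.2 ∩ A) ∈ X := h ▸ ⟨i, hi, rfl⟩
  exact hX _ this

lemma totalView_of_parts {W₁ : BView α} {U : Set α}
    (h1 : ∀ i ∈ W₁, i.1 ∩ U = i.2 ∩ U) (h2 : ∀ i ∈ W₁, i.1 ∩ Uᶜ = i.2 ∩ Uᶜ) :
    totalView W₁ := by
  intro i hi
  have := Set.inter_union_compl i.1 U
  rw [h1 i hi, h2 i hi, Set.inter_union_compl] at this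
  exact this.symm

lemma mem_ofSets_iff {S : Set (Set α)} {i : Set α × Set α} :
    i ∈ ofSets S ↔ ∃ T ∈ S, i = (T, T) := by
  constructor
  · rintro ⟨T, hT, rfl⟩; exact ⟨T, hT, rfl⟩
  · rintro ⟨T, hT, rfl⟩; exact ⟨T, hT, rfl⟩

lemma pair_mem_ofSets {S : Set (Set α)} {T : Set α} : (T, T) ∈ ofSets S ↔ T ∈ S := by
  rw [mem_ofSets_iff]
  constructor
  · rintro ⟨T', hT', h⟩
    rw [Prod.mk.injEq] at h
    rw [h.1]
    exact hT'
  · intro h; exact ⟨T, h, rfl⟩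

end Aux5
section Aux6
variable {α : Type}

lemma spliteq {P B Tp : EProgram α} {U : Set α} (hwf : progWF P)
    (hBT : isSplitting P U B Tp) {W : BView α} {T : Set α}
    (heq : eqBeliefModel (progTheory P) W T) :
    eqBeliefModel (progTheory B) (vrestrict W U) (T ∩ U) ∧
      eqBeliefModel (progTheory (EU Tp (vrestrict W U) U)) (vrestrict W Uᶜ) (T ∩ Uᶜ) := by
  obtain ⟨htotW, hbm, hmin⟩ := heq
  obtain ⟨hisb, -, hdsat, hesat⟩ := hbm
  have hPB : ∀ r ∈ B, r ∈ P := by intro r hr; rw [← hBT.2.1]; exact Or.inl hr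
  have hPTp : ∀ r ∈ Tp, r ∈ P := by intro r hr; rw [← hBT.2.1]; exact Or.inr hr
  have hrBTp : ∀ r ∈ P, r ∈ B ∨ r ∈ Tp := by intro r hr; rw [← hBT.2.1] at hr; exact hr
  have hBatoms := hBT.2.2.1
  have hTpcond := hBT.2.2.2
  have hWne : W.Nonempty := hisb.1
  have htvW : tview W = W := tview_total htotW
  have hWbne : (vrestrict W U).Nonempty := vrestrict_nonempty hWne U
  have hWtne : (vrestrict W Uᶜ).Nonempty := vrestrict_nonempty hWne Uᶜ
  have hWbmem : ∀ i ∈ W, (i.2 ∩ U, i.2 ∩ U) ∈ vrestrict W U := by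
    intro i hi
    refine ⟨i, hi, ?_⟩
    rw [htotW i hi]
  have hsatTpW : ∀ (r : ERule α) (H' T' : Set α),
      sat ((ruleReduct (vrestrict W U) U r).form) W H' T' ↔ sat r.form W H' T' :=
    fun r H' T' => sat_Tp_iff hWne rfl (by rw [htvW]) H' T'
  -- belief model of the bottom at the U-restriction
  have hbmB : beliefModel (vrestrict W U) (T ∩ U) (T ∩ U) (progTheory B) := by
    refine ⟨⟨hWbne, ?_⟩, subset_rfl, ?_, ?_⟩
    · rintro j ⟨i, hi, rfl⟩; exact Set.inter_subset_inter_left _ (hisb.2 i hi)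
    · rintro φ ⟨r, hrB, rfl⟩
      exact (sat_B_iff (hBatoms r hrB) W T T).1 (hdsat _ ⟨r, hPB r hrB, rfl⟩)
    · rintro φ ⟨r, hrB, rfl⟩ j ⟨i, hi, rfl⟩
      exact (sat_B_iff (hBatoms r hrB) W i.1 i.2).1 (hesat _ ⟨r, hPB r hrB, rfl⟩ i hi)
  -- belief model of the reduct of the top at the Uᶜ-restriction
  have hbmE : beliefModel (vrestrict W Uᶜ) (T ∩ Uᶜ) (T ∩ Uᶜ)
      (progTheory (EU Tp (vrestrict W U) U)) := by
    refine ⟨⟨hWtne, ?_⟩, subset_rfl, ?_, ?_⟩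
    · rintro j ⟨i, hi, rfl⟩; exact Set.inter_subset_inter_left _ (hisb.2 i hi)
    · rintro φ ⟨r', ⟨r, hrTp, rfl⟩, rfl⟩
      have h2 := (hsatTpW r T T).2 (hdsat _ ⟨r, hPTp r hrTp, rfl⟩)
      exact (sat_restrict (ruleReduct_atoms (hwf r (hPTp r hrTp)) (hTpcond r hrTp) _)
        W T T).1 h2
    · rintro φ ⟨r', ⟨r, hrTp, rfl⟩, rfl⟩ j ⟨i, hi, rfl⟩
      have h2 := (hsatTpW r i.1 i.2).2 (hesat _ ⟨r, hPTp r hrTp, rfl⟩ i hi)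
      exact (sat_restrict (ruleReduct_atoms (hwf r (hPTp r hrTp)) (hTpcond r hrTp) _)
        W i.1 i.2).1 h2
  refine ⟨⟨totalView_vrestrict htotW U, hbmB, ?_⟩, ⟨totalView_vrestrict htotW Uᶜ, hbmE, ?_⟩⟩
  · -- minimality for the bottom part
    rintro W₁ H₁ T₁ hbm₁ ⟨hle₁, hne₁⟩
    obtain ⟨⟨hT₁, hH₁sub⟩, hle2, hle3⟩ := hle₁
    subst hT₁
    have hW₁wf : ∀ i ∈ W₁, i.1 ⊆ i.2 := hbm₁.1.2
    have hW₁U : ∀ i ∈ W₁, i.2 ⊆ U := by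
      intro i hi
      obtain ⟨H₂, hH₂, -⟩ := hle3 i hi
      obtain ⟨k, hk, hpair⟩ := hH₂
      rw [Prod.mk.injEq] at hpair
      rw [hpair.2]
      exact Set.inter_subset_right
    have hj1U : ∀ j ∈ W₁, j.1 ⊆ U := fun j hj => (hW₁wf j hj).trans (hW₁U j hj)
    have hjex : ∀ i ∈ W, ∃ j ∈ W₁, j.2 = i.2 ∩ U := by
      intro i hi
      obtain ⟨H₂, hH₂, -⟩ := hle2 (i.2 ∩ U, i.2 ∩ U) (hWbmem i hi)
      exact ⟨(H₂, i.2 ∩ U), hH₂, rfl⟩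
    set W' : BView α :=
      {p | ∃ i ∈ W, ∃ j ∈ W₁, j.2 = i.2 ∩ U ∧ p = (j.1 ∪ i.2 ∩ Uᶜ, i.2)} with hW'def
    have hmemW' : ∀ i ∈ W, ∀ j ∈ W₁, j.2 = i.2 ∩ U → (j.1 ∪ i.2 ∩ Uᶜ, i.2) ∈ W' :=
      fun i hi j hj h2 => ⟨i, hi, j, hj, h2, rfl⟩
    have hW'ne : W'.Nonempty := by
      obtain ⟨i, hi⟩ := hWne
      obtain ⟨j, hj, h2⟩ := hjex i hi
      exact ⟨_, hmemW' i hi j hj h2⟩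
    have hwfW' : ∀ p ∈ W', p.1 ⊆ p.2 := by
      rintro p ⟨i, hi, j, hj, h2, rfl⟩
      apply Set.union_subset
      · exact (hW₁wf j hj).trans (by rw [h2]; exact Set.inter_subset_left)
      · exact Set.inter_subset_left
    have htotV' : ∀ p ∈ W', p.1 ∩ Uᶜ = p.2 ∩ Uᶜ := by
      rintro p ⟨i, hi, j, hj, h2, rfl⟩
      show (j.1 ∪ i.2 ∩ Uᶜ) ∩ Uᶜ = i.2 ∩ Uᶜ
      rw [union_inter_right (hj1U j hj) Set.inter_subset_right]
    have htvW' : tview W' = W := by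
      ext q; constructor
      · rintro ⟨p, ⟨i, hi, j, hj, h2, rfl⟩, rfl⟩
        show (i.2, i.2) ∈ W
        exact mem_total htotW hi
      · intro hq
        obtain ⟨j, hj, h2⟩ := hjex q hq
        have hmem : (q.2, q.2) ∈ tview W' := ⟨_, hmemW' q hq j hj h2, rfl⟩
        have e := htotW q hq
        obtain ⟨q1, q2⟩ := q
        simp only at e
        subst e
        exact hmem
    have hW'U : vrestrict W' U = W₁ := by
      ext q; constructor
      · rintro ⟨p, ⟨i, hi, j, hj, h2, rfl⟩, rfl⟩
        show ((j.1 ∪ i.2 ∩ Uᶜ) ∩ U, i.2 ∩ U) ∈ W₁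
        rw [union_inter_left (hj1U j hj) Set.inter_subset_right, ← h2, Prod.mk.eta]
        exact hj
      · intro hq
        obtain ⟨H₂, hH₂, -⟩ := hle3 q hq
        obtain ⟨k, hk, hpair⟩ := hH₂
        rw [Prod.mk.injEq] at hpair
        refine ⟨(q.1 ∪ k.2 ∩ Uᶜ, k.2), hmemW' k hk q hq hpair.2, ?_⟩
        show q = ((q.1 ∪ k.2 ∩ Uᶜ) ∩ U, k.2 ∩ U)
        rw [union_inter_left (hj1U q hq) Set.inter_subset_right, ← hpair.2, Prod.mk.eta]
    have hW'V : vrestrict W' Uᶜ = vrestrict W Uᶜ := by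
      rw [vrestrict_here_total htotV', htvW']
    have hH₁U : H₁ ⊆ U := hH₁sub.trans Set.inter_subset_right
    have hH'U : (H₁ ∪ T ∩ Uᶜ) ∩ U = H₁ := union_inter_left hH₁U Set.inter_subset_right
    have hH'V : (H₁ ∪ T ∩ Uᶜ) ∩ Uᶜ = T ∩ Uᶜ := union_inter_right hH₁U Set.inter_subset_right
    have hbmW' : beliefModel W' (H₁ ∪ T ∩ Uᶜ) T (progTheory P) := by
      refine ⟨⟨hW'ne, hwfW'⟩, ?_, ?_, ?_⟩
      · exact Set.union_subset (hH₁sub.trans Set.inter_subset_left) Set.inter_subset_left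
      · rintro φ ⟨r, hrP, rfl⟩
        rcases hrBTp r hrP with hrB | hrTp
        · rw [sat_B_iff (hBatoms r hrB) W' _ T, hW'U, hH'U]
          exact hbm₁.2.2.1 _ ⟨r, hrB, rfl⟩
        · refine top_transfer (hwf r hrP) (hTpcond r hrTp) hwfW' hW'ne htotV' hH'V ?_ ?_
          · rw [htvW']
            exact hbmE.2.2.1 _ ⟨ruleReduct (vrestrict W U) U r, ⟨r, hrTp, rfl⟩, rfl⟩
          · rw [htvW']
            exact hdsat _ ⟨r, hrP, rfl⟩
      · rintro φ ⟨r, hrP, rfl⟩ p hp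
        obtain ⟨i, hi, j, hj, h2, rfl⟩ := hp
        rcases hrBTp r hrP with hrB | hrTp
        · rw [sat_B_iff (hBatoms r hrB) W', hW'U]
          show sat r.form W₁ ((j.1 ∪ i.2 ∩ Uᶜ) ∩ U) (i.2 ∩ U)
          rw [union_inter_left (hj1U j hj) Set.inter_subset_right, ← h2, ← Prod.mk.eta (p := j)]
          exact hbm₁.2.2.2 _ ⟨r, hrB, rfl⟩ j hj
        · refine top_transfer (hwf r hrP) (hTpcond r hrTp) hwfW' hW'ne htotV'
            (htotV' _ (hmemW' i hi j hj h2)) ?_ ?_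
          · rw [htvW']
            have h3 := hbmE.2.2.2 _ ⟨ruleReduct (vrestrict W U) U r, ⟨r, hrTp, rfl⟩, rfl⟩
              (i.1 ∩ Uᶜ, i.2 ∩ Uᶜ) ⟨i, hi, rfl⟩
            rwa [htotW i hi] at h3
          · rw [htvW']
            exact hesat _ ⟨r, hrP, rfl⟩ (i.2, i.2) (mem_total htotW hi)
    refine hmin W' (H₁ ∪ T ∩ Uᶜ) T hbmW' ⟨⟨⟨rfl, ?_⟩, ?_, ?_⟩, ?_⟩
    · exact Set.union_subset (hH₁sub.trans Set.inter_subset_left) Set.inter_subset_left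
    · intro i hi
      obtain ⟨j, hj, h2⟩ := hjex i hi
      refine ⟨j.1 ∪ i.2 ∩ Uᶜ, hmemW' i hi j hj h2, ?_⟩
      rw [htotW i hi]
      exact Set.union_subset ((hW₁wf j hj).trans (by rw [h2]; exact Set.inter_subset_left))
        Set.inter_subset_left
    · rintro p ⟨i, hi, j, hj, h2, rfl⟩
      exact ⟨i.2, mem_total htotW hi, hwfW' _ (hmemW' i hi j hj h2)⟩
    · intro hcon
      rw [Prod.mk.injEq, Prod.mk.injEq] at hcon
      obtain ⟨hW'W, hH'T, -⟩ := hcon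
      apply hne₁
      rw [Prod.mk.injEq, Prod.mk.injEq]
      refine ⟨?_, ?_, rfl⟩
      · rw [← hW'U, hW'W]
      · have e := congrArg (fun s => s ∩ U) hH'T
        rw [hH'U] at e
        exact e
  · -- minimality for the top part
    rintro W₂ H₂ T₂ hbm₂ ⟨hle₁, hne₁⟩
    obtain ⟨⟨hT₂, hH₂sub⟩, hle2, hle3⟩ := hle₁
    subst hT₂
    have hW₂wf : ∀ i ∈ W₂, i.1 ⊆ i.2 := hbm₂.1.2
    have hW₂V : ∀ i ∈ W₂, i.2 ⊆ Uᶜ := by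
      intro i hi
      obtain ⟨H₃, hH₃, -⟩ := hle3 i hi
      obtain ⟨k, hk, hpair⟩ := hH₃
      rw [Prod.mk.injEq] at hpair
      rw [hpair.2]
      exact Set.inter_subset_right
    have hj1V : ∀ j ∈ W₂, j.1 ⊆ Uᶜ := fun j hj => (hW₂wf j hj).trans (hW₂V j hj)
    have hWtmem : ∀ i ∈ W, (i.2 ∩ Uᶜ, i.2 ∩ Uᶜ) ∈ vrestrict W Uᶜ := by
      intro i hi
      refine ⟨i, hi, ?_⟩
      rw [htotW i hi]
    have hjex : ∀ i ∈ W, ∃ j ∈ W₂, j.2 = i.2 ∩ Uᶜ := by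
      intro i hi
      obtain ⟨H₃, hH₃, -⟩ := hle2 (i.2 ∩ Uᶜ, i.2 ∩ Uᶜ) (hWtmem i hi)
      exact ⟨(H₃, i.2 ∩ Uᶜ), hH₃, rfl⟩
    set W' : BView α :=
      {p | ∃ i ∈ W, ∃ j ∈ W₂, j.2 = i.2 ∩ Uᶜ ∧ p = (i.2 ∩ U ∪ j.1, i.2)} with hW'def
    have hmemW' : ∀ i ∈ W, ∀ j ∈ W₂, j.2 = i.2 ∩ Uᶜ → (i.2 ∩ U ∪ j.1, i.2) ∈ W' :=
      fun i hi j hj h2 => ⟨i, hi, j, hj, h2, rfl⟩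
    have hW'ne : W'.Nonempty := by
      obtain ⟨i, hi⟩ := hWne
      obtain ⟨j, hj, h2⟩ := hjex i hi
      exact ⟨_, hmemW' i hi j hj h2⟩
    have hwfW' : ∀ p ∈ W', p.1 ⊆ p.2 := by
      rintro p ⟨i, hi, j, hj, h2, rfl⟩
      apply Set.union_subset
      · exact Set.inter_subset_left
      · exact (hW₂wf j hj).trans (by rw [h2]; exact Set.inter_subset_left)
    have htvW' : tview W' = W := by
      ext q; constructor
      · rintro ⟨p, ⟨i, hi, j, hj, h2, rfl⟩, rfl⟩
        show (i.2, i.2) ∈ W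
        exact mem_total htotW hi
      · intro hq
        obtain ⟨j, hj, h2⟩ := hjex q hq
        have hmem : (q.2, q.2) ∈ tview W' := ⟨_, hmemW' q hq j hj h2, rfl⟩
        have e := htotW q hq
        obtain ⟨q1, q2⟩ := q
        simp only at e
        subst e
        exact hmem
    have hW'V : vrestrict W' Uᶜ = W₂ := by
      ext q; constructor
      · rintro ⟨p, ⟨i, hi, j, hj, h2, rfl⟩, rfl⟩
        show ((i.2 ∩ U ∪ j.1) ∩ Uᶜ, i.2 ∩ Uᶜ) ∈ W₂
        rw [union_inter_right Set.inter_subset_right (hj1V j hj), ← h2, Prod.mk.eta]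
        exact hj
      · intro hq
        obtain ⟨H₃, hH₃, -⟩ := hle3 q hq
        obtain ⟨k, hk, hpair⟩ := hH₃
        rw [Prod.mk.injEq] at hpair
        refine ⟨(k.2 ∩ U ∪ q.1, k.2), hmemW' k hk q hq hpair.2, ?_⟩
        show q = ((k.2 ∩ U ∪ q.1) ∩ Uᶜ, k.2 ∩ Uᶜ)
        rw [union_inter_right Set.inter_subset_right (hj1V q hq), ← hpair.2, Prod.mk.eta]
    have hW'U : vrestrict W' U = vrestrict W U := by
      ext q; constructor
      · rintro ⟨p, ⟨i, hi, j, hj, h2, rfl⟩, rfl⟩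
        show ((i.2 ∩ U ∪ j.1) ∩ U, i.2 ∩ U) ∈ vrestrict W U
        rw [union_inter_left Set.inter_subset_right (hj1V j hj)]
        exact hWbmem i hi
      · rintro ⟨i, hi, rfl⟩
        obtain ⟨j, hj, h2⟩ := hjex i hi
        refine ⟨(i.2 ∩ U ∪ j.1, i.2), hmemW' i hi j hj h2, ?_⟩
        show (i.1 ∩ U, i.2 ∩ U) = ((i.2 ∩ U ∪ j.1) ∩ U, i.2 ∩ U)
        rw [union_inter_left Set.inter_subset_right (hj1V j hj), htotW i hi]
    have hsatTpW' : ∀ (r : ERule α) (H' T' : Set α),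
        sat ((ruleReduct (vrestrict W U) U r).form) W' H' T' ↔ sat r.form W' H' T' :=
      fun r H' T' => sat_Tp_iff hW'ne hW'U (by rw [htvW']) H' T'
    have hH₂V : H₂ ⊆ Uᶜ := hH₂sub.trans Set.inter_subset_right
    have hH'U : (T ∩ U ∪ H₂) ∩ U = T ∩ U := union_inter_left Set.inter_subset_right hH₂V
    have hH'V : (T ∩ U ∪ H₂) ∩ Uᶜ = H₂ := union_inter_right Set.inter_subset_right hH₂V
    have hbmW' : beliefModel W' (T ∩ U ∪ H₂) T (progTheory P) := by
      refine ⟨⟨hW'ne, hwfW'⟩, ?_, ?_, ?_⟩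
      · exact Set.union_subset Set.inter_subset_left (hH₂sub.trans Set.inter_subset_left)
      · rintro φ ⟨r, hrP, rfl⟩
        rcases hrBTp r hrP with hrB | hrTp
        · rw [sat_B_iff (hBatoms r hrB) W' _ T, hW'U, hH'U]
          exact hbmB.2.2.1 _ ⟨r, hrB, rfl⟩
        · rw [← hsatTpW' r]
          rw [sat_restrict (ruleReduct_atoms (hwf r (hPTp r hrTp)) (hTpcond r hrTp)
            (vrestrict W U)) W', hW'V, hH'V]
          exact hbm₂.2.2.1 _ ⟨ruleReduct (vrestrict W U) U r, ⟨r, hrTp, rfl⟩, rfl⟩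
      · rintro φ ⟨r, hrP, rfl⟩ p hp
        obtain ⟨i, hi, j, hj, h2, rfl⟩ := hp
        rcases hrBTp r hrP with hrB | hrTp
        · rw [sat_B_iff (hBatoms r hrB) W', hW'U]
          show sat r.form (vrestrict W U) ((i.2 ∩ U ∪ j.1) ∩ U) (i.2 ∩ U)
          rw [union_inter_left Set.inter_subset_right (hj1V j hj)]
          exact hbmB.2.2.2 _ ⟨r, hrB, rfl⟩ (i.2 ∩ U, i.2 ∩ U) (hWbmem i hi)
        · rw [← hsatTpW' r]
          rw [sat_restrict (ruleReduct_atoms (hwf r (hPTp r hrTp)) (hTpcond r hrTp)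
            (vrestrict W U)) W', hW'V]
          show sat _ W₂ ((i.2 ∩ U ∪ j.1) ∩ Uᶜ) (i.2 ∩ Uᶜ)
          rw [union_inter_right Set.inter_subset_right (hj1V j hj), ← h2,
            ← Prod.mk.eta (p := j)]
          exact hbm₂.2.2.2 _ ⟨ruleReduct (vrestrict W U) U r, ⟨r, hrTp, rfl⟩, rfl⟩ j hj
    refine hmin W' (T ∩ U ∪ H₂) T hbmW' ⟨⟨⟨rfl, ?_⟩, ?_, ?_⟩, ?_⟩
    · exact Set.union_subset Set.inter_subset_left (hH₂sub.trans Set.inter_subset_left)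
    · intro i hi
      obtain ⟨j, hj, h2⟩ := hjex i hi
      refine ⟨i.2 ∩ U ∪ j.1, hmemW' i hi j hj h2, ?_⟩
      rw [htotW i hi]
      exact Set.union_subset Set.inter_subset_left
        ((hW₂wf j hj).trans (by rw [h2]; exact Set.inter_subset_left))
    · rintro p ⟨i, hi, j, hj, h2, rfl⟩
      exact ⟨i.2, mem_total htotW hi, hwfW' _ (hmemW' i hi j hj h2)⟩
    · intro hcon
      rw [Prod.mk.injEq, Prod.mk.injEq] at hcon
      obtain ⟨hW'W, hH'T, -⟩ := hcon
      apply hne₁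
      rw [Prod.mk.injEq, Prod.mk.injEq]
      refine ⟨?_, ?_, rfl⟩
      · rw [← hW'V, hW'W]
      · have e := congrArg (fun s => s ∩ Uᶜ) hH'T
        rw [hH'V] at e
        exact e

end Aux6
section Aux7
variable {α : Type}

lemma jointeq {P B Tp : EProgram α} {U : Set α} (hwf : progWF P)
    (hBT : isSplitting P U B Tp) {W : BView α}
    (htotW : totalView W) (hisb : isBView W)
    (hesat : ∀ φ ∈ progTheory P, epSat W φ)
    {Tb Tt : Set α}
    (heqb : eqBeliefModel (progTheory B) (vrestrict W U) Tb)
    (heqt : eqBeliefModel (progTheory (EU Tp (vrestrict W U) U)) (vrestrict W Uᶜ) Tt) :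
    eqBeliefModel (progTheory P) W (Tb ∪ Tt) := by
  have hPB : ∀ r ∈ B, r ∈ P := by intro r hr; rw [← hBT.2.1]; exact Or.inl hr
  have hPTp : ∀ r ∈ Tp, r ∈ P := by intro r hr; rw [← hBT.2.1]; exact Or.inr hr
  have hrBTp : ∀ r ∈ P, r ∈ B ∨ r ∈ Tp := by intro r hr; rw [← hBT.2.1] at hr; exact hr
  have hBatoms := hBT.2.2.1
  have hTpcond := hBT.2.2.2
  have hWne : W.Nonempty := hisb.1
  have htvW : tview W = W := tview_total htotW
  have hsatTpW : ∀ (r : ERule α) (H' T' : Set α),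
      sat ((ruleReduct (vrestrict W U) U r).form) W H' T' ↔ sat r.form W H' T' :=
    fun r H' T' => sat_Tp_iff hWne rfl (by rw [htvW]) H' T'
  have hTbU : Tb ⊆ U := eq_subset (progB_atoms hBatoms) heqb
  have hTtV : Tt ⊆ Uᶜ :=
    eq_subset (progEU_atoms (fun r hr => hwf r (hPTp r hr)) hTpcond _) heqt
  have hTU : (Tb ∪ Tt) ∩ U = Tb := union_inter_left hTbU hTtV
  have hTV : (Tb ∪ Tt) ∩ Uᶜ = Tt := union_inter_right hTbU hTtV
  obtain ⟨-, hbmb, hminb⟩ := heqb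
  obtain ⟨-, hbmt, hmint⟩ := heqt
  refine ⟨htotW, ⟨hisb, subset_rfl, ?_, hesat⟩, ?_⟩
  · -- designated satisfaction
    rintro φ ⟨r, hrP, rfl⟩
    rcases hrBTp r hrP with hrB | hrTp
    · rw [sat_B_iff (hBatoms r hrB) W, hTU]
      exact hbmb.2.2.1 _ ⟨r, hrB, rfl⟩
    · rw [← hsatTpW r, sat_restrict (ruleReduct_atoms (hwf r hrP) (hTpcond r hrTp)
        (vrestrict W U)) W, hTV]
      exact hbmt.2.2.1 _ ⟨ruleReduct (vrestrict W U) U r, ⟨r, hrTp, rfl⟩, rfl⟩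
  · -- minimality
    rintro W₁ H₁ T₁ hbm₁ ⟨hle₁, hne₁⟩
    have hT₁ := hle₁.1.1
    subst hT₁
    have htvW₁ : tview W₁ = W := tview_of_biLE hle₁ htotW
    have hW₁ne : W₁.Nonempty := hbm₁.1.1
    -- bottom restriction
    have hbm₁U : beliefModel (vrestrict W₁ U) (H₁ ∩ U) ((Tb ∪ Tt) ∩ U) (progTheory B) := by
      refine ⟨⟨vrestrict_nonempty hW₁ne U, ?_⟩,
        Set.inter_subset_inter_left _ hbm₁.2.1, ?_, ?_⟩
      · rintro j ⟨i, hi, rfl⟩; exact Set.inter_subset_inter_left _ (hbm₁.1.2 i hi)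
      · rintro φ ⟨r, hrB, rfl⟩
        exact (sat_B_iff (hBatoms r hrB) W₁ H₁ _).1 (hbm₁.2.2.1 _ ⟨r, hPB r hrB, rfl⟩)
      · rintro φ ⟨r, hrB, rfl⟩ j ⟨i, hi, rfl⟩
        exact (sat_B_iff (hBatoms r hrB) W₁ i.1 i.2).1
          (hbm₁.2.2.2 _ ⟨r, hPB r hrB, rfl⟩ i hi)
    have hleU : biLE (vrestrict W₁ U) (H₁ ∩ U) ((Tb ∪ Tt) ∩ U)
        (vrestrict W U) ((Tb ∪ Tt) ∩ U) ((Tb ∪ Tt) ∩ U) := biLE_restrict U hle₁ htotW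
    rw [hTU] at hleU hbm₁U
    by_cases hcase : (vrestrict W₁ U, H₁ ∩ U, Tb) = ((vrestrict W U : BView α), Tb, Tb)
    · -- bottom parts coincide: contradict minimality of the top part
      rw [Prod.mk.injEq, Prod.mk.injEq] at hcase
      obtain ⟨hcW, hcH, -⟩ := hcase
      have hsatTpW₁ : ∀ (r : ERule α) (H' T' : Set α),
          sat ((ruleReduct (vrestrict W U) U r).form) W₁ H' T' ↔ sat r.form W₁ H' T' :=
        fun r H' T' => sat_Tp_iff hW₁ne hcW (by rw [htvW₁]) H' T'
      have hbm₁V : beliefModel (vrestrict W₁ Uᶜ) (H₁ ∩ Uᶜ) ((Tb ∪ Tt) ∩ Uᶜ)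
          (progTheory (EU Tp (vrestrict W U) U)) := by
        refine ⟨⟨vrestrict_nonempty hW₁ne Uᶜ, ?_⟩,
          Set.inter_subset_inter_left _ hbm₁.2.1, ?_, ?_⟩
        · rintro j ⟨i, hi, rfl⟩; exact Set.inter_subset_inter_left _ (hbm₁.1.2 i hi)
        · rintro φ ⟨r', ⟨r, hrTp, rfl⟩, rfl⟩
          have h3 := (hsatTpW₁ r H₁ _).2 (hbm₁.2.2.1 _ ⟨r, hPTp r hrTp, rfl⟩)
          exact (sat_restrict (ruleReduct_atoms (hwf r (hPTp r hrTp)) (hTpcond r hrTp)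
            (vrestrict W U)) W₁ H₁ _).1 h3
        · rintro φ ⟨r', ⟨r, hrTp, rfl⟩, rfl⟩ j ⟨i, hi, rfl⟩
          have h3 := (hsatTpW₁ r i.1 i.2).2 (hbm₁.2.2.2 _ ⟨r, hPTp r hrTp, rfl⟩ i hi)
          exact (sat_restrict (ruleReduct_atoms (hwf r (hPTp r hrTp)) (hTpcond r hrTp)
            (vrestrict W U)) W₁ i.1 i.2).1 h3
      have hleV := biLE_restrict Uᶜ hle₁ htotW
      rw [hTV] at hleV hbm₁V
      refine hmint _ _ _ hbm₁V ⟨hleV, ?_⟩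
      intro hcon
      rw [Prod.mk.injEq, Prod.mk.injEq] at hcon
      obtain ⟨hcV, hcHV, -⟩ := hcon
      have hp1 : ∀ i ∈ W₁, i.1 ∩ U = i.2 ∩ U :=
        restrict_total_inter hcW (totalView_vrestrict htotW U)
      have hp2 : ∀ i ∈ W₁, i.1 ∩ Uᶜ = i.2 ∩ Uᶜ :=
        restrict_total_inter hcV (totalView_vrestrict htotW Uᶜ)
      have htot₁ : totalView W₁ := totalView_of_parts hp1 hp2
      have hWW : W₁ = W := by rw [← tview_total htot₁, htvW₁]
      have hHH : H₁ = Tb ∪ Tt := by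
        have := Set.inter_union_compl H₁ U
        rw [hcH, hcHV] at this
        exact this.symm
      exact hne₁ (by rw [Prod.mk.injEq, Prod.mk.injEq]; exact ⟨hWW, hHH, rfl⟩)
    · -- bottom parts differ: contradict minimality of the bottom part
      exact hminb _ _ _ hbm₁U ⟨hleU, hcase⟩

end Aux7
section Aux8
variable {α : Type}

lemma isBView_vrestrict {W : BView α} (h : isBView W) (A : Set α) :
    isBView (vrestrict W A) := by
  refine ⟨vrestrict_nonempty h.1 A, ?_⟩
  rintro j ⟨i, hi, rfl⟩
  exact Set.inter_subset_inter_left _ (h.2 i hi)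

lemma main_fwd {P B Tp : EProgram α} {U : Set α} (hwf : progWF P)
    (hBT : isSplitting P U B Tp) {W : BView α} (hF : FAEEL (progTheory P) W) :
    FAEEL (progTheory B) (vrestrict W U) ∧
      FAEEL (progTheory (EU Tp (vrestrict W U) U)) (vrestrict W Uᶜ) ∧
      W = vjoin (vrestrict W U) (vrestrict W Uᶜ) := by
  obtain ⟨hisb, htot, hWeq⟩ := hF
  have hWne := hisb.1
  have hPTp : ∀ r ∈ Tp, r ∈ P := by intro r hr; rw [← hBT.2.1]; exact Or.inr hr
  have hBatoms := hBT.2.2.1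
  have hTpcond := hBT.2.2.2
  have hmemeq : ∀ T : Set α, (T, T) ∈ W ↔ eqBeliefModel (progTheory P) W T := by
    intro T; constructor
    · intro h; rw [hWeq] at h; exact pair_mem_ofSets.1 h
    · intro h; rw [hWeq]; exact pair_mem_ofSets.2 h
  have hmemW : ∀ i ∈ W, eqBeliefModel (progTheory P) W i.2 :=
    fun i hi => (hmemeq i.2).1 (mem_total htot hi)
  have hesat : ∀ φ ∈ progTheory P, epSat W φ := by
    obtain ⟨i, hi⟩ := hWne
    exact fun φ hφ => (hmemW i hi).2.1.2.2.2 φ hφ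
  have hFB : FAEEL (progTheory B) (vrestrict W U) := by
    refine ⟨isBView_vrestrict hisb U, totalView_vrestrict htot U, ?_⟩
    ext i; constructor
    · rintro ⟨k, hk, rfl⟩
      rw [htot k hk]
      exact pair_mem_ofSets.2 (spliteq hwf hBT (hmemW k hk)).1
    · intro hmem
      obtain ⟨Tb, hTb, rfl⟩ := mem_ofSets_iff.1 hmem
      obtain ⟨k, hk⟩ := hWne
      have heqt₀ := (spliteq hwf hBT (hmemW k hk)).2
      have hjoint := jointeq hwf hBT htot hisb hesat hTb heqt₀
      have hTbU : Tb ⊆ U := eq_subset (progB_atoms hBatoms) hTb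
      have e : (Tb ∪ k.2 ∩ Uᶜ) ∩ U = Tb := union_inter_left hTbU Set.inter_subset_right
      refine ⟨(Tb ∪ k.2 ∩ Uᶜ, Tb ∪ k.2 ∩ Uᶜ), (hmemeq _).2 hjoint, ?_⟩
      show (Tb, Tb) = ((Tb ∪ k.2 ∩ Uᶜ) ∩ U, (Tb ∪ k.2 ∩ Uᶜ) ∩ U)
      rw [e]
  have hFE : FAEEL (progTheory (EU Tp (vrestrict W U) U)) (vrestrict W Uᶜ) := by
    refine ⟨isBView_vrestrict hisb Uᶜ, totalView_vrestrict htot Uᶜ, ?_⟩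
    ext i; constructor
    · rintro ⟨k, hk, rfl⟩
      rw [htot k hk]
      exact pair_mem_ofSets.2 (spliteq hwf hBT (hmemW k hk)).2
    · intro hmem
      obtain ⟨Tt, hTt, rfl⟩ := mem_ofSets_iff.1 hmem
      obtain ⟨k, hk⟩ := hWne
      have heqb₀ := (spliteq hwf hBT (hmemW k hk)).1
      have hjoint := jointeq hwf hBT htot hisb hesat heqb₀ hTt
      have hTtV : Tt ⊆ Uᶜ :=
        eq_subset (progEU_atoms (fun r hr => hwf r (hPTp r hr)) hTpcond _) hTt
      have e : (k.2 ∩ U ∪ Tt) ∩ Uᶜ = Tt := union_inter_right Set.inter_subset_right hTtV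
      refine ⟨(k.2 ∩ U ∪ Tt, k.2 ∩ U ∪ Tt), (hmemeq _).2 hjoint, ?_⟩
      show (Tt, Tt) = ((k.2 ∩ U ∪ Tt) ∩ Uᶜ, (k.2 ∩ U ∪ Tt) ∩ Uᶜ)
      rw [e]
  refine ⟨hFB, hFE, ?_⟩
  ext i; constructor
  · intro hi
    refine ⟨(i.2 ∩ U, i.2 ∩ U), ⟨i, hi, by rw [htot i hi]⟩,
      (i.2 ∩ Uᶜ, i.2 ∩ Uᶜ), ⟨i, hi, by rw [htot i hi]⟩, ?_⟩
    have e := htot i hi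
    obtain ⟨H, T⟩ := i
    simp only at e ⊢
    subst e
    rw [Set.inter_union_compl]
  · rintro ⟨j, hj, k, hk, rfl⟩
    obtain ⟨m, hm, rfl⟩ := hj
    obtain ⟨n, hn, rfl⟩ := hk
    have heb := (spliteq hwf hBT (hmemW m hm)).1
    have het := (spliteq hwf hBT (hmemW n hn)).2
    have hjoint := jointeq hwf hBT htot hisb hesat heb het
    have : (m.2 ∩ U ∪ n.2 ∩ Uᶜ, m.2 ∩ U ∪ n.2 ∩ Uᶜ) ∈ W := (hmemeq _).2 hjoint
    rw [htot m hm, htot n hn]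
    exact this
  
lemma main_bwd {P B Tp : EProgram α} {U : Set α} (hwf : progWF P)
    (hBT : isSplitting P U B Tp) {Wb Wt : BView α}
    (hFb : FAEEL (progTheory B) Wb) (hFt : FAEEL (progTheory (EU Tp Wb U)) Wt) :
    FAEEL (progTheory P) (vjoin Wb Wt) := by
  obtain ⟨hisbb, htotb, hWbeq⟩ := hFb
  obtain ⟨hisbt, htott, hWteq⟩ := hFt
  have hPB : ∀ r ∈ B, r ∈ P := by intro r hr; rw [← hBT.2.1]; exact Or.inl hr
  have hPTp : ∀ r ∈ Tp, r ∈ P := by intro r hr; rw [← hBT.2.1]; exact Or.inr hr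
  have hrBTp : ∀ r ∈ P, r ∈ B ∨ r ∈ Tp := by intro r hr; rw [← hBT.2.1] at hr; exact hr
  have hBatoms := hBT.2.2.1
  have hTpcond := hBT.2.2.2
  have hbU : ∀ i ∈ Wb, i.1 ⊆ U ∧ i.2 ⊆ U :=
    FAEEL_elem_subset (progB_atoms hBatoms) ⟨hisbb, htotb, hWbeq⟩
  have htV : ∀ i ∈ Wt, i.1 ⊆ Uᶜ ∧ i.2 ⊆ Uᶜ :=
    FAEEL_elem_subset (progEU_atoms (fun r hr => hwf r (hPTp r hr)) hTpcond Wb)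
      ⟨hisbt, htott, hWteq⟩
  have htUe : ∀ i ∈ Wt, i.1 ∩ U = ∅ ∧ i.2 ∩ U = ∅ := by
    intro i hi
    constructor
    · exact Set.eq_empty_iff_forall_notMem.2 (fun a ⟨h1, h2⟩ => (htV i hi).1 h1 h2)
    · exact Set.eq_empty_iff_forall_notMem.2 (fun a ⟨h1, h2⟩ => (htV i hi).2 h1 h2)
  have hbVe : ∀ i ∈ Wb, i.1 ∩ Uᶜ = ∅ ∧ i.2 ∩ Uᶜ = ∅ := by
    intro i hi
    constructor
    · exact Set.eq_empty_iff_forall_notMem.2 (fun a ⟨h1, h2⟩ => h2 ((hbU i hi).1 h1))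
    · exact Set.eq_empty_iff_forall_notMem.2 (fun a ⟨h1, h2⟩ => h2 ((hbU i hi).2 h1))
  have hWbU : vrestrict (vjoin Wb Wt) U = Wb := vrestrict_vjoin hbU htUe hisbt.1
  have hWtV : vrestrict (vjoin Wb Wt) Uᶜ = Wt := by
    have h := vrestrict_vjoin htV hbVe hisbb.1
    rwa [vjoin_comm] at h
  have htotW : totalView (vjoin Wb Wt) := by
    rintro i ⟨j, hj, k, hk, rfl⟩
    simp only
    rw [htotb j hj, htott k hk]
  have hisbW : isBView (vjoin Wb Wt) := by
    refine ⟨?_, fun i hi => by rw [htotW i hi]⟩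
    obtain ⟨j, hj⟩ := hisbb.1
    obtain ⟨k, hk⟩ := hisbt.1
    exact ⟨_, j, hj, k, hk, rfl⟩
  have hWne := hisbW.1
  have htvW : tview (vjoin Wb Wt) = vjoin Wb Wt := tview_total htotW
  have hmembeq : ∀ Tb : Set α, (Tb, Tb) ∈ Wb ↔ eqBeliefModel (progTheory B) Wb Tb := by
    intro Tb; constructor
    · intro h; rw [hWbeq] at h; exact pair_mem_ofSets.1 h
    · intro h; rw [hWbeq]; exact pair_mem_ofSets.2 h
  have hmemteq : ∀ Tt : Set α,
      (Tt, Tt) ∈ Wt ↔ eqBeliefModel (progTheory (EU Tp Wb U)) Wt Tt := by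
    intro Tt; constructor
    · intro h; rw [hWteq] at h; exact pair_mem_ofSets.1 h
    · intro h; rw [hWteq]; exact pair_mem_ofSets.2 h
  have hepb : ∀ φ ∈ progTheory B, epSat Wb φ := by
    obtain ⟨m, hm⟩ := hisbb.1
    exact fun φ hφ => ((hmembeq m.2).1 (mem_total htotb hm)).2.1.2.2.2 φ hφ
  have hept : ∀ φ ∈ progTheory (EU Tp Wb U), epSat Wt φ := by
    obtain ⟨m, hm⟩ := hisbt.1
    exact fun φ hφ => ((hmemteq m.2).1 (mem_total htott hm)).2.1.2.2.2 φ hφ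
  have hsatTpW : ∀ (r : ERule α) (H' T' : Set α),
      sat ((ruleReduct Wb U r).form) (vjoin Wb Wt) H' T' ↔
        sat r.form (vjoin Wb Wt) H' T' :=
    fun r H' T' => sat_Tp_iff hWne hWbU (by rw [htvW]; exact hWbU) H' T'
  have hesat : ∀ φ ∈ progTheory P, epSat (vjoin Wb Wt) φ := by
    rintro φ ⟨r, hrP, rfl⟩ i hi
    rcases hrBTp r hrP with hrB | hrTp
    · rw [sat_B_iff (hBatoms r hrB) (vjoin Wb Wt) i.1 i.2, hWbU]
      exact hepb _ ⟨r, hrB, rfl⟩ _ (by rw [← hWbU]; exact ⟨i, hi, rfl⟩)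
    · rw [← hsatTpW r, sat_restrict (ruleReduct_atoms (hwf r hrP) (hTpcond r hrTp) Wb)
        (vjoin Wb Wt) i.1 i.2, hWtV]
      exact hept _ ⟨ruleReduct Wb U r, ⟨r, hrTp, rfl⟩, rfl⟩ _
        (by rw [← hWtV]; exact ⟨i, hi, rfl⟩)
  refine ⟨hisbW, htotW, ?_⟩
  ext i; constructor
  · rintro ⟨j, hj, k, hk, rfl⟩
    have heb : eqBeliefModel (progTheory B) (vrestrict (vjoin Wb Wt) U) j.2 := by
      rw [hWbU]; exact (hmembeq j.2).1 (mem_total htotb hj)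
    have het : eqBeliefModel (progTheory (EU Tp (vrestrict (vjoin Wb Wt) U) U))
        (vrestrict (vjoin Wb Wt) Uᶜ) k.2 := by
      rw [hWbU, hWtV]; exact (hmemteq k.2).1 (mem_total htott hk)
    have hjoint := jointeq hwf hBT htotW hisbW hesat heb het
    rw [htotb j hj, htott k hk]
    exact pair_mem_ofSets.2 hjoint
  · intro hmem
    obtain ⟨T, hT, rfl⟩ := mem_ofSets_iff.1 hmem
    have hsp := spliteq hwf hBT hT
    have h1 : (T ∩ U, T ∩ U) ∈ Wb := by
      refine (hmembeq _).2 ?_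
      rw [← hWbU]; exact hsp.1
    have h2 : (T ∩ Uᶜ, T ∩ Uᶜ) ∈ Wt := by
      refine (hmemteq _).2 ?_
      have := hsp.2
      rwa [hWbU, hWtV] at this
    refine ⟨(T ∩ U, T ∩ U), h1, (T ∩ Uᶜ, T ∩ Uᶜ), h2, ?_⟩
    show (T, T) = (T ∩ U ∪ T ∩ Uᶜ, T ∩ U ∪ T ∩ Uᶜ)
    rw [Set.inter_union_compl]

end Aux8

/-- Epistemic splitting in FAEEL, Main Theorem. -/
theorem stmt9 {α : Type} (P : EProgram α) (hwf : progWF P) (U : Set α)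
    (hU : splittingSet P U) (B Tp : EProgram α) (hBT : isSplitting P U B Tp)
    (W : BView α) (hW : totalView W) :
    (FAEEL (progTheory P) W ↔
      ∃ Wb Wt, FAEEL (progTheory B) Wb ∧ FAEEL (progTheory (EU Tp Wb U)) Wt ∧
        W = vjoin Wb Wt) ∧
    (FAEEL (progTheory P) W →
      FAEEL (progTheory B) (vrestrict W U) ∧
      FAEEL (progTheory (EU Tp (vrestrict W U) U)) (vrestrict W Uᶜ) ∧
      W = vjoin (vrestrict W U) (vrestrict W Uᶜ)) := by
  refine ⟨⟨fun hF => ?_, ?_⟩, fun hF => main_fwd hwf hBT hF⟩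
  · obtain ⟨h1, h2, h3⟩ := main_fwd hwf hBT hF
    exact ⟨_, _, h1, h2, h3⟩
  · rintro ⟨Wb, Wt, hFb, hFt, rfl⟩
    exact main_bwd hwf hBT hFb hFt
end Epist
end

section
/- Let S and S' be any two semantics (maps assigning to each program a collection of total belief views, called its world views) that both satisfy the epistemic splitting property and the supra-ASP property, and let Π be an epistemically stratified program over a finite set of atoms At. Then exactly one of the following holds: (i) Π has no S-world view and no S'-world view, or (ii) Π has exactly one S-world view and exactly one S'-world view, and they are equal. -/
namespace Epist

attribute [local instance] Classical.propDecidable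

variable {α : Type}

end Epist
namespace Epist
section Aux
attribute [local instance] Classical.propDecidable
variable {α : Type}

/-- K-freeness of a formula. -/
def Kfree : EForm α → Prop
  | .bot => True
  | .atom _ => True
  | .and φ ψ => Kfree φ ∧ Kfree ψ
  | .or φ ψ => Kfree φ ∧ Kfree ψ
  | .imp φ ψ => Kfree φ ∧ Kfree ψ
  | .K _ => False

lemma base_Kfree {φ : EForm α} (h : isAtomBase φ) : Kfree φ := by
  rcases h with ⟨a, rfl⟩ | rfl | rfl <;> simp [Kfree, EForm.top, EForm.neg]

lemma objlit_Kfree {φ : EForm α} (h : isObjLit φ) : Kfree φ := by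
  rcases h with h | ⟨ψ, hψ, rfl⟩ | ⟨ψ, hψ, rfl⟩
  · exact base_Kfree h
  · exact ⟨base_Kfree hψ, trivial⟩
  · exact ⟨⟨base_Kfree hψ, trivial⟩, trivial⟩

lemma subjlit_not_Kfree {φ : EForm α} (h : isSubjLit φ) : ¬ Kfree φ := by
  rcases h with ⟨l, _, rfl⟩ | ⟨l, _, rfl⟩ | ⟨l, _, rfl⟩ <;>
    simp [Kfree, EForm.neg]

lemma objlit_not_subjlit {φ : EForm α} (h1 : isObjLit φ) (h2 : isSubjLit φ) : False :=
  subjlit_not_Kfree h2 (objlit_Kfree h1)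

lemma base_atoms_subsingleton {φ : EForm α} (h : isAtomBase φ) : φ.atoms.Subsingleton := by
  rcases h with ⟨a, rfl⟩ | rfl | rfl <;>
    simp [EForm.atoms, EForm.top, EForm.neg, Set.subsingleton_singleton,
      Set.subsingleton_empty]

lemma objlit_atoms_subsingleton {φ : EForm α} (h : isObjLit φ) : φ.atoms.Subsingleton := by
  rcases h with h | ⟨ψ, hψ, rfl⟩ | ⟨ψ, hψ, rfl⟩
  · exact base_atoms_subsingleton h
  · simpa [EForm.neg, EForm.atoms] using base_atoms_subsingleton hψ
  · simpa [EForm.neg, EForm.atoms] using base_atoms_subsingleton hψ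

lemma subjlit_atoms_eq {φ : EForm α} (h : isSubjLit φ) :
    ∃ l, isObjLit l ∧ φ.atoms = l.atoms := by
  rcases h with ⟨l, hl, rfl⟩ | ⟨l, hl, rfl⟩ | ⟨l, hl, rfl⟩ <;>
    exact ⟨l, hl, by simp [EForm.neg, EForm.atoms]⟩

lemma subjlit_atoms_subsingleton {φ : EForm α} (h : isSubjLit φ) : φ.atoms.Subsingleton := by
  obtain ⟨l, hl, he⟩ := subjlit_atoms_eq h
  rw [he]; exact objlit_atoms_subsingleton hl

lemma base_reduct {W : BView α} {U : Set α} {φ : EForm α} (h : isAtomBase φ) :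
    reduct W U φ = φ := by
  rcases h with ⟨a, rfl⟩ | rfl | rfl <;> simp [reduct, EForm.top, EForm.neg]

lemma objlit_reduct {W : BView α} {U : Set α} {φ : EForm α} (h : isObjLit φ) :
    reduct W U φ = φ := by
  rcases h with h | ⟨ψ, hψ, rfl⟩ | ⟨ψ, hψ, rfl⟩
  · exact base_reduct h
  · simp [EForm.neg, reduct, base_reduct hψ]
  · simp [EForm.neg, reduct, base_reduct hψ]

lemma isAtomBase_top : isAtomBase (EForm.top : EForm α) := Or.inr (Or.inl rfl)
lemma isAtomBase_bot : isAtomBase (EForm.bot : EForm α) := Or.inr (Or.inr rfl)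

lemma isObjLit_ite_base {φ : EForm α} (h : isAtomBase φ) : isObjLit φ := Or.inl h

lemma top_atoms : (EForm.top : EForm α).atoms = ∅ := by
  simp [EForm.top, EForm.neg, EForm.atoms]

lemma subjlit_reduct {W : BView α} {U : Set α} {φ : EForm α} (h : isSubjLit φ) :
    (φ.atoms ⊆ U ∧ isObjLit (reduct W U φ) ∧ (reduct W U φ).atoms = ∅) ∨
    ((¬ φ.atoms ⊆ U) ∧ reduct W U φ = φ) := by
  have hb : ∀ l : EForm α, isObjLit l →
      (l.atoms ⊆ U → isAtomBase (reduct W U (.K l)) ∧ (reduct W U (.K l)).atoms = ∅) ∧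
      (¬ l.atoms ⊆ U → reduct W U (.K l) = .K l) := by
    intro l hl
    constructor
    · intro hA
      have : reduct W U (.K l) = if epSat W (.K l) then EForm.top else .bot := by
        simp [reduct, hA, EForm.atoms]
      rw [this]
      split_ifs
      · exact ⟨isAtomBase_top, top_atoms⟩
      · exact ⟨isAtomBase_bot, by simp [EForm.atoms]⟩
    · intro hA
      have : reduct W U (.K l) = .K (reduct W U l) := by
        simp [reduct, EForm.atoms, hA]
      rw [this, objlit_reduct hl]
  rcases h with ⟨l, hl, rfl⟩ | ⟨l, hl, rfl⟩ | ⟨l, hl, rfl⟩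
  · by_cases hA : l.atoms ⊆ U
    · left
      refine ⟨by simpa [EForm.atoms] using hA, Or.inl ((hb l hl).1 hA).1, ((hb l hl).1 hA).2⟩
    · right
      exact ⟨by simpa [EForm.atoms] using hA, (hb l hl).2 hA⟩
  · have hred : reduct W U (EForm.neg (.K l)) = .imp (reduct W U (.K l)) .bot := by
      simp [EForm.neg, reduct]
    by_cases hA : l.atoms ⊆ U
    · left
      refine ⟨by simp [EForm.neg, EForm.atoms, hA], ?_, ?_⟩
      · rw [hred]
        exact Or.inr (Or.inl ⟨_, ((hb l hl).1 hA).1, rfl⟩)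
      · rw [hred]
        simp [EForm.atoms, ((hb l hl).1 hA).2]
    · right
      refine ⟨by simp [EForm.neg, EForm.atoms, hA], ?_⟩
      rw [hred, (hb l hl).2 hA]
      rfl
  · have hred : reduct W U (EForm.neg (EForm.neg (.K l))) =
        .imp (.imp (reduct W U (.K l)) .bot) .bot := by
      simp [EForm.neg, reduct]
    by_cases hA : l.atoms ⊆ U
    · left
      refine ⟨by simp [EForm.neg, EForm.atoms, hA], ?_, ?_⟩
      · rw [hred]
        exact Or.inr (Or.inr ⟨_, ((hb l hl).1 hA).1, rfl⟩)
      · rw [hred]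
        simp [EForm.atoms, ((hb l hl).1 hA).2]
    · right
      refine ⟨by simp [EForm.neg, EForm.atoms, hA], ?_⟩
      rw [hred, (hb l hl).2 hA]
      rfl

end Aux
section Aux2
attribute [local instance] Classical.propDecidable
variable {α : Type} {W : BView α} {U : Set α} {r : ERule α}

lemma mem_reduct_body {φ' : EForm α} (h : φ' ∈ (ruleReduct W U r).body) :
    ∃ φ ∈ r.body, φ' = reduct W U φ := by
  obtain ⟨φ, hφ, he⟩ := List.mem_map.mp h
  exact ⟨φ, hφ, he.symm⟩

lemma ruleReduct_head : (ruleReduct W U r).head = r.head := rfl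

lemma ruleReduct_headAtoms : (ruleReduct W U r).headAtoms = r.headAtoms := rfl

lemma ruleReduct_wf (hr : r.wf) : (ruleReduct W U r).wf := by
  intro φ' hφ'
  obtain ⟨φ, hφ, rfl⟩ := mem_reduct_body hφ'
  rcases hr φ hφ with ho | hs
  · rw [objlit_reduct ho]; exact Or.inl ho
  · rcases subjlit_reduct (W := W) (U := U) hs with ⟨_, ho, _⟩ | ⟨_, he⟩
    · exact Or.inl ho
    · rw [he]; exact Or.inr hs

lemma ruleReduct_objBody (hr : r.wf) :
    (ruleReduct W U r).objBodyAtoms ⊆ r.objBodyAtoms := by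
  rintro a ⟨φ', hφ', hobj, ha⟩
  obtain ⟨φ, hφ, rfl⟩ := mem_reduct_body hφ'
  rcases hr φ hφ with ho | hs
  · rw [objlit_reduct ho] at hobj ha
    exact ⟨φ, hφ, ho, ha⟩
  · rcases subjlit_reduct (W := W) (U := U) hs with ⟨_, _, hempty⟩ | ⟨_, he⟩
    · rw [hempty] at ha; exact absurd ha (Set.notMem_empty a)
    · rw [he] at hobj; exact absurd (objlit_not_subjlit hobj hs) id

lemma ruleReduct_subjBody (hr : r.wf) :
    (ruleReduct W U r).subjBodyAtoms ⊆ {a | a ∈ r.subjBodyAtoms ∧ a ∉ U} := by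
  rintro a ⟨φ', hφ', hsub, ha⟩
  obtain ⟨φ, hφ, rfl⟩ := mem_reduct_body hφ'
  rcases hr φ hφ with ho | hs
  · rw [objlit_reduct ho] at hsub
    exact absurd (objlit_not_subjlit ho hsub) id
  · rcases subjlit_reduct (W := W) (U := U) hs with ⟨_, ho, _⟩ | ⟨hns, he⟩
    · exact absurd (objlit_not_subjlit ho hsub) id
    · rw [he] at ha
      obtain ⟨c, hc, hcU⟩ := Set.not_subset.mp hns
      have : c = a := subjlit_atoms_subsingleton hs hc ha
      exact ⟨⟨φ, hφ, hs, ha⟩, this ▸ hcU⟩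

lemma ruleReduct_body_subjlit {φ' : EForm α} (hr : r.wf) (hφ' : φ' ∈ (ruleReduct W U r).body)
    (hsub : isSubjLit φ') : φ' ∈ r.body ∧ ¬ φ'.atoms ⊆ U := by
  obtain ⟨φ, hφ, rfl⟩ := mem_reduct_body hφ'
  rcases hr φ hφ with ho | hs
  · rw [objlit_reduct ho] at hsub ⊢
    exact absurd (objlit_not_subjlit ho hsub) id
  · rcases subjlit_reduct (W := W) (U := U) hs with ⟨_, ho, _⟩ | ⟨hns, he⟩
    · exact absurd (objlit_not_subjlit ho hsub) id
    · rw [he]; exact ⟨hφ, hns⟩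

lemma headAtoms_subset_atoms : r.headAtoms ⊆ r.atoms := fun _ ha => Or.inl ha

lemma objBodyAtoms_subset_atoms : r.objBodyAtoms ⊆ r.atoms := by
  rintro a ⟨φ, hφ, _, ha⟩; exact Or.inr ⟨φ, hφ, ha⟩

lemma subjBodyAtoms_subset_atoms : r.subjBodyAtoms ⊆ r.atoms := by
  rintro a ⟨φ, hφ, _, ha⟩; exact Or.inr ⟨φ, hφ, ha⟩

lemma ruleReduct_atoms_s10 (hr : r.wf) :
    (ruleReduct W U r).atoms ⊆
      r.headAtoms ∪ r.objBodyAtoms ∪ (ruleReduct W U r).subjBodyAtoms := by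
  rintro a (ha | ⟨φ', hφ', ha⟩)
  · exact Or.inl (Or.inl ha)
  · obtain ⟨φ, hφ, rfl⟩ := mem_reduct_body hφ'
    rcases hr φ hφ with ho | hs
    · rw [objlit_reduct ho] at ha
      exact Or.inl (Or.inr ⟨φ, hφ, ho, ha⟩)
    · rcases subjlit_reduct (W := W) (U := U) hs with ⟨_, _, hempty⟩ | ⟨_, he⟩
      · rw [hempty] at ha; exact absurd ha (Set.notMem_empty a)
      · refine Or.inr ⟨reduct W U φ, ?_, by rw [he]; exact hs, ha⟩
        exact List.mem_map.mpr ⟨φ, hφ, rfl⟩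

end Aux2
section Aux3
attribute [local instance] Classical.propDecidable
variable {α : Type}

/-- All subjective literals occurring in the program have at least one atom. -/
def clean (P : EProgram α) : Prop :=
  ∀ r ∈ P, ∀ φ ∈ r.body, isSubjLit φ → φ.atoms.Nonempty

/-- The atoms occurring in subjective body literals of the program. -/
def subjAtomsSet (P : EProgram α) : Set α := {a | ∃ r ∈ P, a ∈ r.subjBodyAtoms}

lemma EU_wf {Tp : EProgram α} {W : BView α} {U : Set α} (h : progWF Tp) :
    progWF (EU Tp W U) := by
  rintro r' ⟨r, hr, rfl⟩
  exact ruleReduct_wf (h r hr)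

lemma EU_clean {Tp : EProgram α} {W : BView α} {U : Set α} (h : progWF Tp) :
    clean (EU Tp W U) := by
  rintro r' ⟨r, hr, rfl⟩ φ' hφ' hsub
  obtain ⟨_, hns⟩ := ruleReduct_body_subjlit (h r hr) hφ' hsub
  obtain ⟨c, hc, _⟩ := Set.not_subset.mp hns
  exact ⟨c, hc⟩

lemma EU_subjAtoms {Tp : EProgram α} {W : BView α} {U : Set α} (h : progWF Tp) :
    subjAtomsSet (EU Tp W U) ⊆ {a | a ∈ subjAtomsSet Tp ∧ a ∉ U} := by
  rintro a ⟨r', ⟨r, hr, rfl⟩, ha⟩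
  obtain ⟨h1, h2⟩ := ruleReduct_subjBody (h r hr) ha
  exact ⟨⟨r, hr, h1⟩, h2⟩

lemma EU_cond1 {P Tp : EProgram α} {W : BView α} {U : Set α} (lam : α → ℕ)
    (hwf : progWF P) (hTp : Tp ⊆ P)
    (h1 : ∀ r ∈ P, ∀ a ∈ r.atoms \ r.subjBodyAtoms, ∀ b ∈ r.atoms \ r.subjBodyAtoms,
      lam a = lam b)
    (h2 : ∀ a b, dep P a b → lam a > lam b) :
    ∀ r ∈ EU Tp W U, ∀ a ∈ r.atoms \ r.subjBodyAtoms, ∀ b ∈ r.atoms \ r.subjBodyAtoms,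
      lam a = lam b := by
  rintro r' ⟨r, hr, rfl⟩ a ⟨haA, hanS⟩ b ⟨hbA, hbnS⟩
  have hrP : r ∈ P := hTp hr
  have key : ∀ x, x ∈ (ruleReduct W U r).atoms → x ∉ (ruleReduct W U r).subjBodyAtoms →
      x ∈ r.atoms \ r.subjBodyAtoms := by
    intro x hx hxn
    rcases ruleReduct_atoms_s10 (hwf r hrP) hx with (hh | ho) | hsub'
    · refine ⟨headAtoms_subset_atoms hh, fun hxs => ?_⟩
      exact absurd (h2 x x ⟨r, hrP, Or.inl hh, hxs⟩) (lt_irrefl _)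
    · refine ⟨objBodyAtoms_subset_atoms ho, fun hxs => ?_⟩
      exact absurd (h2 x x ⟨r, hrP, Or.inr ho, hxs⟩) (lt_irrefl _)
    · exact absurd hsub' hxn
  exact h1 r hrP a (key a haA hanS) b (key b hbA hbnS)

lemma EU_cond2 {P Tp : EProgram α} {W : BView α} {U : Set α} (lam : α → ℕ)
    (hwf : progWF P) (hTp : Tp ⊆ P)
    (h2 : ∀ a b, dep P a b → lam a > lam b) :
    ∀ a b, dep (EU Tp W U) a b → lam a > lam b := by
  rintro a b ⟨r', ⟨r, hr, rfl⟩, haHO, hbS⟩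
  have hrP : r ∈ P := hTp hr
  obtain ⟨hb1, _⟩ := ruleReduct_subjBody (hwf r hrP) hbS
  rcases haHO with hh | ho
  · exact h2 a b ⟨r, hrP, Or.inl hh, hb1⟩
  · exact h2 a b ⟨r, hrP, Or.inr (ruleReduct_objBody (hwf r hrP) ho), hb1⟩

lemma SM_empty : SMset (progTheory (∅ : EProgram α)) = {(∅ : Set α)} := by
  have h0 : progTheory (∅ : EProgram α) = ∅ := by simp [progTheory]
  rw [h0]
  ext T
  simp only [SMset, stableModel, Set.mem_setOf_eq, Set.mem_singleton_iff]
  constructor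
  · rintro ⟨_, h⟩
    by_contra hT
    exact h ∅ (Set.empty_ssubset.mpr (Set.nonempty_iff_ne_empty.mpr
      hT)) (fun φ hφ => absurd hφ (Set.notMem_empty φ))
  · rintro rfl
    exact ⟨fun φ hφ => absurd hφ (Set.notMem_empty φ),
      fun H hH _ => hH.2 (Set.empty_subset H)⟩

lemma S_empty {S : EProgram α → BView α → Prop} (hS2 : supraASP S) :
    ∀ W, S ∅ W ↔ W = ofSets {(∅ : Set α)} := by
  have hwf : progWF (∅ : EProgram α) := fun r hr => absurd hr (Set.notMem_empty r)
  have hobj : progObjective (∅ : EProgram α) := fun r hr => absurd hr (Set.notMem_empty r)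
  rcases hS2 ∅ hwf hobj with ⟨_, h⟩ | ⟨h0, _⟩
  · intro W; rw [h W, SM_empty]
  · rw [SM_empty] at h0
    exact absurd h0 (Set.singleton_ne_empty ∅)

lemma vjoin_emptyview (Wt : BView α) : vjoin (ofSets {(∅ : Set α)}) Wt = Wt := by
  ext i
  simp only [vjoin, Set.mem_setOf_eq, ofSets, Set.image_singleton, Set.mem_singleton_iff]
  constructor
  · rintro ⟨j, rfl, k, hk, rfl⟩
    simpa using hk
  · intro hi
    exact ⟨(∅, ∅), rfl, i, hi, by simp⟩

/-- The conclusion of the main theorem, as a predicate on programs. -/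
def Concl (S S' : EProgram α → BView α → Prop) (P : EProgram α) : Prop :=
  ((¬ ∃ W, S P W) ∧ (¬ ∃ W, S' P W)) ∨
    (∃ W, S P W ∧ S' P W ∧ (∀ W', S P W' → W' = W) ∧ ∀ W', S' P W' → W' = W)

lemma concl_base {S S' : EProgram α → BView α → Prop}
    (hS2 : supraASP S) (hS2' : supraASP S') (P : EProgram α)
    (hwf : progWF P) (hobj : progObjective P) : Concl S S' P := by
  rcases hS2 P hwf hobj with ⟨hne, h⟩ | ⟨he, h⟩ <;>
    rcases hS2' P hwf hobj with ⟨hne', h'⟩ | ⟨he', h'⟩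
  · exact Or.inr ⟨ofSets (SMset (progTheory P)), (h _).mpr rfl, (h' _).mpr rfl,
      fun W' hw => (h W').mp hw, fun W' hw => (h' W').mp hw⟩
  · exact absurd he' hne
  · exact absurd he hne'
  · exact Or.inl ⟨fun ⟨W, hW⟩ => h W hW, fun ⟨W, hW⟩ => h' W hW⟩

lemma concl_step {S S' : EProgram α → BView α → Prop} {P Q : EProgram α}
    {f : BView α → BView α}
    (h : ∀ W, S P W ↔ ∃ Wt, S Q Wt ∧ W = f Wt)
    (h' : ∀ W, S' P W ↔ ∃ Wt, S' Q Wt ∧ W = f Wt)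
    (hQ : Concl S S' Q) : Concl S S' P := by
  rcases hQ with ⟨hA, hB⟩ | ⟨Wt, h1, h2, h3, h4⟩
  · refine Or.inl ⟨fun ⟨W, hW⟩ => ?_, fun ⟨W, hW⟩ => ?_⟩
    · obtain ⟨Wt, hWt, _⟩ := (h W).mp hW; exact hA ⟨Wt, hWt⟩
    · obtain ⟨Wt, hWt, _⟩ := (h' W).mp hW; exact hB ⟨Wt, hWt⟩
  · refine Or.inr ⟨f Wt, (h _).mpr ⟨Wt, h1, rfl⟩, (h' _).mpr ⟨Wt, h2, rfl⟩, ?_, ?_⟩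
    · intro W' hW'
      obtain ⟨Wt', hWt', rfl⟩ := (h W').mp hW'
      rw [h3 Wt' hWt']
    · intro W' hW'
      obtain ⟨Wt', hWt', rfl⟩ := (h' W').mp hW'
      rw [h4 Wt' hWt']

end Aux3
section Key
attribute [local instance] Classical.propDecidable
variable {α : Type}

lemma not_objective_subjAtom {P : EProgram α} (hwf : progWF P) (hcl : clean P)
    (hobj : ¬ progObjective P) : ∃ b ∈ subjAtomsSet P, True := by
  have : ∃ r ∈ P, ∃ φ ∈ r.body, ¬ isObjLit φ := by
    simp only [progObjective, ERule.objective, not_forall] at hobj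
    obtain ⟨r, hr, h⟩ := hobj
    obtain ⟨φ, hφ, hn⟩ := by simpa [not_forall] using h
    exact ⟨r, hr, φ, hφ, hn⟩
  obtain ⟨r, hr, φ, hφ, hn⟩ := this
  have hs : isSubjLit φ := (hwf r hr φ hφ).resolve_left hn
  obtain ⟨b, hb⟩ := hcl r hr φ hφ hs
  exact ⟨b, ⟨r, hr, φ, hφ, hs, hb⟩, trivial⟩

lemma keyL [Finite α] (S S' : EProgram α → BView α → Prop)
    (hS1 : satisfiesSplitting S) (hS2 : supraASP S)
    (hS1' : satisfiesSplitting S') (hS2' : supraASP S') :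
    ∀ n (P : EProgram α) (lam : α → ℕ), progWF P → clean P →
    (∀ r ∈ P, ∀ a ∈ r.atoms \ r.subjBodyAtoms, ∀ b ∈ r.atoms \ r.subjBodyAtoms,
      lam a = lam b) →
    (∀ a b, dep P a b → lam a > lam b) →
    (subjAtomsSet P).ncard ≤ n → Concl S S' P := by
  intro n
  induction n with
  | zero =>
    intro P lam hwf hcl h1 h2 hn
    by_cases hobj : progObjective P
    · exact concl_base hS2 hS2' P hwf hobj
    · obtain ⟨b, hb, -⟩ := not_objective_subjAtom hwf hcl hobj
      have : 0 < (subjAtomsSet P).ncard :=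
        (Set.ncard_pos (Set.toFinite _)).mpr ⟨b, hb⟩
      omega
  | succ n ih =>
    intro P lam hwf hcl h1 h2 hn
    by_cases hobj : progObjective P
    · exact concl_base hS2 hS2' P hwf hobj
    obtain ⟨b0, hb0, -⟩ := not_objective_subjAtom hwf hcl hobj
    set k := sInf (lam '' subjAtomsSet P) with hkdef
    have hne : (lam '' subjAtomsSet P).Nonempty := ⟨lam b0, Set.mem_image_of_mem _ hb0⟩
    obtain ⟨bk, hbk, hbkeq⟩ := Nat.sInf_mem hne
    have hk_le : ∀ b ∈ subjAtomsSet P, k ≤ lam b :=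
      fun b hb => Nat.sInf_le (Set.mem_image_of_mem _ hb)
    set U : Set α := {a | lam a ≤ k} with hUdef
    set B : EProgram α := {r ∈ P | r.atoms ⊆ U ∧ r.objective} with hBdef
    set Tp : EProgram α := {r ∈ P | ¬ (r.atoms ⊆ U ∧ r.objective)} with hTdef
    -- the top condition
    have hTpcond : ∀ r ∈ P, ¬ (r.atoms ⊆ U ∧ r.objective) →
        ∀ a ∈ r.objBodyAtoms ∪ r.headAtoms, a ∉ U := by
      intro r hrP hr a ha
      by_cases hro : r.objective
      · have hna : ¬ r.atoms ⊆ U := fun h => hr ⟨h, hro⟩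
        obtain ⟨c, hc, hcU⟩ := Set.not_subset.mp hna
        have hsubj : r.subjBodyAtoms = ∅ := by
          ext x
          simp only [ERule.subjBodyAtoms, Set.mem_setOf_eq, Set.mem_empty_iff_false,
            iff_false, not_exists]
          rintro φ ⟨hφ, hs, _⟩
          exact objlit_not_subjlit (hro φ hφ) hs
        have haA : a ∈ r.atoms \ r.subjBodyAtoms := by
          refine ⟨?_, by simp [hsubj]⟩
          rcases ha with h | h
          · exact objBodyAtoms_subset_atoms h
          · exact headAtoms_subset_atoms h
        have hcA : c ∈ r.atoms \ r.subjBodyAtoms := ⟨hc, by simp [hsubj]⟩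
        have heq : lam a = lam c := h1 r hrP a haA c hcA
        intro hU
        exact hcU (show lam c ≤ k from heq ▸ hU)
      · have : ∃ φ ∈ r.body, ¬ isObjLit φ := by
          simp only [ERule.objective, not_forall] at hro
          obtain ⟨φ, h⟩ := hro
          obtain ⟨hφ, hn⟩ := by simpa [not_forall] using h
          exact ⟨φ, hφ, hn⟩
        obtain ⟨φ, hφ, hnophi⟩ := this
        have hs := (hwf r hrP φ hφ).resolve_left hnophi
        obtain ⟨b, hb⟩ := hcl r hrP φ hφ hs
        have hbm : b ∈ subjAtomsSet P := ⟨r, hrP, φ, hφ, hs, hb⟩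
        have hgt : lam a > lam b :=
          h2 a b ⟨r, hrP, ha.elim Or.inr Or.inl, ⟨φ, hφ, hs, hb⟩⟩
        have hle : k ≤ lam b := hk_le b hbm
        intro hU
        have : lam a ≤ k := hU
        omega
    have hss : splittingSet P U := by
      intro r hr
      by_cases h : r.atoms ⊆ U ∧ r.objective
      · exact Or.inl h.1
      · exact Or.inr (Set.eq_empty_iff_forall_notMem.mpr
          (fun a ⟨h1a, h2a⟩ => hTpcond r hr h a h1a h2a))
    have hsplit : isSplitting P U B Tp := by
      refine ⟨?_, ?_, fun r hr => hr.2.1, ?_⟩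
      · ext r
        constructor
        · rintro ⟨⟨_, h⟩, ⟨_, h'⟩⟩
          exact h' h
        · intro h
          exact absurd h (Set.notMem_empty r)
      · ext r
        constructor
        · rintro (hr | hr) <;> exact hr.1
        · intro h
          by_cases hc : r.atoms ⊆ U ∧ r.objective
          · exact Or.inl ⟨h, hc⟩
          · exact Or.inr ⟨h, hc⟩
      · rintro r ⟨hrP, hr⟩
        exact Set.eq_empty_iff_forall_notMem.mpr
          (fun a ⟨h1a, h2a⟩ => hTpcond r hrP hr a h1a h2a)
    have hwfB : progWF B := fun r hr => hwf r hr.1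
    have hobjB : progObjective B := fun r hr => hr.2.2
    have hwfTp : progWF Tp := fun r hr => hwf r hr.1
    rcases hS2 B hwfB hobjB with ⟨hne1, hSB⟩ | ⟨he1, hSB⟩
    swap
    · rcases hS2' B hwfB hobjB with ⟨hne2, hSB'⟩ | ⟨he2, hSB'⟩
      · exact absurd he1 hne2
      · refine Or.inl ⟨fun ⟨W, hW⟩ => ?_, fun ⟨W, hW⟩ => ?_⟩
        · obtain ⟨Wb, Wt, h1b, _⟩ := (hS1 P hwf U hss B Tp hsplit W).mp hW
          exact hSB Wb h1b
        · obtain ⟨Wb, Wt, h1b, _⟩ := (hS1' P hwf U hss B Tp hsplit W).mp hW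
          exact hSB' Wb h1b
    · rcases hS2' B hwfB hobjB with ⟨hne2, hSB'⟩ | ⟨he2, hSB'⟩
      swap
      · exact absurd he2 hne1
      ·
        set Wb : BView α := ofSets (SMset (progTheory B)) with hWbdef
        set Q : EProgram α := EU Tp Wb U with hQdef
        have hPiff : ∀ W, S P W ↔ ∃ Wt, S Q Wt ∧ W = vjoin Wb Wt := by
          intro W
          rw [hS1 P hwf U hss B Tp hsplit W]
          constructor
          · rintro ⟨Wb', Wt, hb', ht, he⟩
            rw [(hSB Wb').mp hb'] at ht he
            exact ⟨Wt, ht, he⟩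
          · rintro ⟨Wt, ht, he⟩
            exact ⟨Wb, Wt, (hSB Wb).mpr rfl, ht, he⟩
        have hPiff' : ∀ W, S' P W ↔ ∃ Wt, S' Q Wt ∧ W = vjoin Wb Wt := by
          intro W
          rw [hS1' P hwf U hss B Tp hsplit W]
          constructor
          · rintro ⟨Wb', Wt, hb', ht, he⟩
            rw [(hSB' Wb').mp hb'] at ht he
            exact ⟨Wt, ht, he⟩
          · rintro ⟨Wt, ht, he⟩
            exact ⟨Wb, Wt, (hSB' Wb).mpr rfl, ht, he⟩
        have hTpsub : Tp ⊆ P := fun r hr => hr.1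
        have hmeas : (subjAtomsSet Q).ncard ≤ n := by
          have hsub : subjAtomsSet Q ⊂ subjAtomsSet P := by
            constructor
            · intro a ha
              obtain ⟨⟨r, hr, h⟩, _⟩ := EU_subjAtoms hwfTp ha
              exact ⟨r, hTpsub hr, h⟩
            · intro hEq
              have hbkQ : bk ∈ subjAtomsSet Q := hEq hbk
              obtain ⟨_, hnU⟩ := EU_subjAtoms hwfTp hbkQ
              exact hnU (show lam bk ≤ k from le_of_eq hbkeq)
          have := Set.ncard_lt_ncard hsub (Set.toFinite _)
          omega
        exact concl_step hPiff hPiff'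
          (ih Q lam (EU_wf hwfTp) (EU_clean hwfTp)
            (EU_cond1 lam hwf hTpsub h1 h2) (EU_cond2 lam hwf hTpsub h2) hmeas)

end Key
/-- any two semantics satisfying epistemic splitting and supra-ASP
agree on epistemically stratified programs, which have at most one world view. -/
theorem stmt10 {α : Type} [Finite α] (S S' : EProgram α → BView α → Prop)
    (hTot : ∀ P W, S P W → totalView W) (hTot' : ∀ P W, S' P W → totalView W)
    (hS1 : satisfiesSplitting S) (hS2 : supraASP S)
    (hS1' : satisfiesSplitting S') (hS2' : supraASP S')
    (P : EProgram α) (hwf : progWF P) (hstrat : stratified P) :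
    ((¬ ∃ W, S P W) ∧ (¬ ∃ W, S' P W)) ∨
      (∃ W, S P W ∧ S' P W ∧ (∀ W', S P W' → W' = W) ∧ ∀ W', S' P W' → W' = W) := by
  obtain ⟨lam, h1, h2⟩ := hstrat
  -- pre-split at the empty splitting set, to remove atomless subjective literals
  have hss : splittingSet P ∅ := fun r _ => Or.inr (Set.inter_empty _)
  have hsplit : isSplitting P ∅ ∅ P := by
    refine ⟨Set.empty_inter P, Set.empty_union P,
      fun r hr => absurd hr (Set.notMem_empty r), fun r _ => Set.inter_empty _⟩
  set W0 : BView α := ofSets {(∅ : Set α)} with hW0def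
  set Q : EProgram α := EU P W0 ∅ with hQdef
  have hPQ : ∀ W, S P W ↔ S Q W := by
    intro W
    rw [hS1 P hwf ∅ hss ∅ P hsplit W]
    constructor
    · rintro ⟨Wb, Wt, hb, ht, rfl⟩
      rw [(S_empty hS2 Wb).mp hb] at ht ⊢
      rwa [vjoin_emptyview]
    · intro h
      exact ⟨W0, W, (S_empty hS2 W0).mpr rfl, h, (vjoin_emptyview W).symm⟩
  have hPQ' : ∀ W, S' P W ↔ S' Q W := by
    intro W
    rw [hS1' P hwf ∅ hss ∅ P hsplit W]
    constructor
    · rintro ⟨Wb, Wt, hb, ht, rfl⟩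
      rw [(S_empty hS2' Wb).mp hb] at ht ⊢
      rwa [vjoin_emptyview]
    · intro h
      exact ⟨W0, W, (S_empty hS2' W0).mpr rfl, h, (vjoin_emptyview W).symm⟩
  have hconQ : Concl S S' Q :=
    keyL S S' hS1 hS2 hS1' hS2' (subjAtomsSet Q).ncard Q lam
      (EU_wf hwf) (EU_clean hwf)
      (EU_cond1 lam hwf (le_refl P) h1 h2) (EU_cond2 lam hwf (le_refl P) h2) le_rfl
  rcases hconQ with ⟨hA, hB⟩ | ⟨W, hSW, hS'W, hu, hu'⟩
  · exact Or.inl ⟨fun ⟨W, hW⟩ => hA ⟨W, (hPQ W).mp hW⟩,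
      fun ⟨W, hW⟩ => hB ⟨W, (hPQ' W).mp hW⟩⟩
  · exact Or.inr ⟨W, (hPQ W).mpr hSW, (hPQ' W).mpr hS'W,
      fun W' hW' => hu W' ((hPQ W').mp hW'),
      fun W' hW' => hu' W' ((hPQ' W').mp hW')⟩
end Epist
end
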